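/- Let α > 1 be non-integer with n = ⌈α⌉, let a₁, a₂, b₁, b₂ ∈ ℝ with b₁b₂ ≠ 0, set s̃₁ = −a₁/b₁ and s̃₂ = −a₂/b₂, and assume that k/α + s̃_i is not a positive integer for every k = 1, …, n and i = 1, 2. For constants c_{k,1}, c_{k,2} ∈ ℝ define φ(z) = Σ_{k=1}^n c_{k,1} z^{α−k} ₃Ψ₁[4b₁b₂ z^{2α} | (1 − k/(2α) − s̃₁/2, 1), (1/2 − k/(2α) − s̃₂/2, 1), (1,1); (1 + α − k, 2α)] + 2b₁ Σ_{k=1}^n c_{k,2} z^{2α−k} ₃Ψ₁[4b₁b₂ z^{2α} | (3/2 − k/(2α) − s̃₁/2, 1), (1 − k/(2α) − s̃₂/2, 1), (1,1); (1 + 2α − k, 2α)] and ψ(z) = 2b₂ Σ_{k=1}^n c_{k,1} z^{2α−k} ₃Ψ₁[4b₁b₂ z^{2α} | (1 − k/(2α) − s̃₁/2, 1), (3/2 − k/(2α) − s̃₂/2, 1), (1,1); (1 + 2α − k, 2α)] + Σ_{k=1}^n c_{k,2} z^{α−k} ₃Ψ₁[4b₁b₂ z^{2α} | (1/2 − k/(2α)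 − s̃₁/2, 1), (1 − k/(2α) − s̃₂/2, 1), (1,1); (1 + α − k, 2α)]. Then (d^α/dz^α)φ(z) = a₁ ψ(z) + (b₁/α) z ψ′(z) and (d^α/dz^α)ψ(z) = a₂ φ(z) + (b₂/α) z φ′(z) for all z > 0. -/

import Mathlib

open Real MeasureTheory

/-- Riemann–Liouville fractional derivative of order `α` (with `n = ⌈α⌉₊`, so that
`n - 1 < α < n` when `α > 0` is not an integer). -/
noncomputable def rlDeriv (α : ℝ) (f : ℝ → ℝ) (z : ℝ) : ℝ :=
  (1 / Real.Gamma ((⌈α⌉₊ : ℝ) - α)) *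
    iteratedDeriv ⌈α⌉₊
      (fun x => ∫ s in (0:ℝ)..x, (x - s) ^ ((⌈α⌉₊ : ℝ) - α - 1) * f s) z

/-- Riemann–Liouville derivative of a complex-valued function,
applied to its real and imaginary parts. -/
noncomputable def rlDerivC (α : ℝ) (f : ℝ → ℂ) (z : ℝ) : ℂ :=
  (rlDeriv α (fun x => (f x).re) z : ℂ) +
    (rlDeriv α (fun x => (f x).im) z : ℂ) * Complex.I

/-- The Mittag-Leffler function `E_{ρ,β}(x)`.  (Recall that in Mathlib the real
Gamma function vanishes at nonpositive integers, so `1/Γ` is `0` there.) -/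
noncomputable def mittagLeffler (ρ β x : ℝ) : ℝ :=
  ∑' i : ℕ, x ^ i / Real.Gamma (ρ * i + β)

/-- The generalized Wright function `ₚΨ_q[x | (A_i, a_i); (B_j, b_j)]`. -/
noncomputable def genWright {p q : ℕ} (A a : Fin p → ℝ) (B b : Fin q → ℝ) (x : ℝ) : ℝ :=
  ∑' k : ℕ, ((∏ i, Real.Gamma (A i + a i * k)) / (∏ j, Real.Gamma (B j + b j * k)))
      * x ^ k / (Nat.factorial k : ℝ)

/-- The Wright function `Ψ(x; ρ, β)`. -/
noncomputable def wrightFn (x ρ β : ℝ) : ℝ :=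
  ∑' i : ℕ, x ^ i / ((Nat.factorial i : ℝ) * Real.Gamma (ρ * i + β))

/-- The Fox H-function `H^{m,0}_{p,q}[w | (A_i,a_i); (B_j,b_j)]`, given by its
Mellin–Barnes integral along the vertical line with real abscissa `γ`. -/
noncomputable def foxH {p q : ℕ} (m : ℕ) (A a : Fin p → ℝ) (B b : Fin q → ℝ)
    (γ : ℝ) (w : ℝ) : ℂ :=
  ((1 / (2 * Real.pi) : ℝ) : ℂ) * ∫ t : ℝ,
    (∏ j : Fin q, if (j : ℕ) < m then
        Complex.Gamma ((B j : ℂ) - (b j : ℂ) * ((γ : ℂ) + (t : ℂ) * Complex.I)) else 1) /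
      ((∏ i : Fin p, Complex.Gamma ((A i : ℂ) - (a i : ℂ) * ((γ : ℂ) + (t : ℂ) * Complex.I))) *
        (∏ j : Fin q, if (j : ℕ) < m then 1 else
          Complex.Gamma (1 - (B j : ℂ) + (b j : ℂ) * ((γ : ℂ) + (t : ℂ) * Complex.I)))) *
    (w : ℂ) ^ ((γ : ℂ) + (t : ℂ) * Complex.I)

/-- `x` is not a negative integer. -/
def notNegInt (x : ℝ) : Prop := ∀ j : ℤ, j < 0 → x ≠ (j : ℝ)

/-- `x` is not a nonpositive integer. -/
def notNonposInt (x : ℝ) : Prop := ∀ j : ℤ, j ≤ 0 → x ≠ (j : ℝ)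



set_option maxHeartbeats 2000000

section Aux
open Filter intervalIntegral

lemma gautschi_ub {y s : ℝ} (hy : 2 ≤ y) (hs0 : 0 ≤ s) (hs1 : s ≤ 1) :
    Real.Gamma (y + 1) ≤ Real.Gamma (y + s) * (y + s) ^ (1 - s) := by
  have hys : (0:ℝ) < y + s := by linarith
  have h1 : (0:ℝ) < y + s + 1 := by linarith
  have hconv := Real.convexOn_log_Gamma.2 (Set.mem_Ioi.2 hys) (Set.mem_Ioi.2 h1)
      hs0 (by linarith : (0:ℝ) ≤ 1 - s) (by ring)
  have harg : s • (y + s) + (1 - s) • (y + s + 1) = y + 1 := by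
    simp only [smul_eq_mul]; ring
  rw [harg] at hconv
  have hrec : Real.Gamma (y + s + 1) = (y + s) * Real.Gamma (y + s) :=
    Real.Gamma_add_one hys.ne'
  have hG : 0 < Real.Gamma (y + s) := Real.Gamma_pos_of_pos hys
  have hG1 : 0 < Real.Gamma (y + 1) := Real.Gamma_pos_of_pos (by linarith)
  simp only [Function.comp_apply, smul_eq_mul] at hconv
  rw [hrec, Real.log_mul hys.ne' hG.ne'] at hconv
  have : Real.log (Real.Gamma (y + 1)) ≤
      Real.log (Real.Gamma (y + s)) + (1 - s) * Real.log (y + s) := by nlinarith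
  calc Real.Gamma (y + 1) = Real.exp (Real.log (Real.Gamma (y + 1))) := (Real.exp_log hG1).symm
    _ ≤ Real.exp (Real.log (Real.Gamma (y + s)) + (1 - s) * Real.log (y + s)) :=
        Real.exp_le_exp.2 this
    _ = Real.Gamma (y + s) * (y + s) ^ (1 - s) := by
        rw [Real.exp_add, Real.exp_log hG, Real.rpow_def_of_pos hys]; ring_nf

lemma gamma_lb : ∀ s : ℝ, 0 ≤ s → ∀ y : ℝ, 2 ≤ y →
    2 / 3 * y ^ s * Real.Gamma y ≤ Real.Gamma (y + s) := by
  have aux : ∀ N : ℕ, ∀ s : ℝ, 0 ≤ s → s ≤ N + 1 → ∀ y : ℝ, 2 ≤ y →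
      2 / 3 * y ^ s * Real.Gamma y ≤ Real.Gamma (y + s) := by
    intro N
    induction N with
    | zero =>
      intro s hs0 hs1 y hy
      simp only [Nat.cast_zero, zero_add] at hs1
      have hy0 : (0:ℝ) < y := by linarith
      have hys : (0:ℝ) < y + s := by linarith
      have hG : 0 < Real.Gamma y := Real.Gamma_pos_of_pos hy0
      have hub := gautschi_ub hy hs0 hs1
      have hrec : Real.Gamma (y + 1) = y * Real.Gamma y := Real.Gamma_add_one hy0.ne'
      have hA : (0:ℝ) < (y + s) ^ (1 - s) := Real.rpow_pos_of_pos hys _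
      have hB : (0:ℝ) < (y + s) ^ s := Real.rpow_pos_of_pos hys _
      have hAB : (y + s) ^ (1 - s) * (y + s) ^ s = y + s := by
        rw [← Real.rpow_add hys]; simp
      have hBy : y ^ s ≤ (y + s) ^ s :=
        Real.rpow_le_rpow (by linarith) (by linarith) hs0
      have hys3 : 2 * (y + s) ≤ 3 * y := by linarith
      have hyG : 0 < y ^ s := Real.rpow_pos_of_pos hy0 _
      rw [hrec] at hub
      have h1 : y * Real.Gamma y * (y + s) ^ s ≤ Real.Gamma (y + s) * (y + s) := by
        have := mul_le_mul_of_nonneg_right hub hB.le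
        calc y * Real.Gamma y * (y + s) ^ s ≤ Real.Gamma (y + s) * (y + s) ^ (1 - s) * (y + s) ^ s := this
          _ = Real.Gamma (y + s) * (y + s) := by rw [mul_assoc, hAB]
      have h2 : y * Real.Gamma y * y ^ s ≤ y * Real.Gamma y * (y + s) ^ s :=
        mul_le_mul_of_nonneg_left hBy (by positivity)
      have h3 : 2 / 3 * y ^ s * Real.Gamma y * (y + s) ≤ y * Real.Gamma y * y ^ s := by
        nlinarith [mul_pos hyG hG]
      have h4 : 2 / 3 * y ^ s * Real.Gamma y * (y + s) ≤ Real.Gamma (y + s) * (y + s) := by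
        linarith
      exact le_of_mul_le_mul_right h4 hys
    | succ N ih =>
      intro s hs0 hs1 y hy
      rcases le_or_gt s (N + 1) with h | h
      · exact ih s hs0 h y hy
      · have hs1' : (0:ℝ) ≤ s - 1 := by
          have : (1:ℝ) ≤ (N:ℝ) + 1 := by
            have := Nat.cast_nonneg (α := ℝ) N; linarith
          linarith
        have h2 : s - 1 ≤ N + 1 := by push_cast; push_cast at hs1; linarith
        have := ih (s - 1) hs1' h2 y hy
        have hrec : Real.Gamma (y + s) = (y + s - 1) * Real.Gamma (y + s - 1) := by
          have : y + s = (y + (s - 1)) + 1 := by ring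
          rw [this, Real.Gamma_add_one (by nlinarith : y + (s-1) ≠ 0)]
          ring_nf
        have hpow : y ^ s = y ^ (s - 1) * y := by
          rw [← Real.rpow_add_one (by linarith : y ≠ 0)]; ring_nf
        have hGpos : 0 < Real.Gamma (y + (s-1)) := Real.Gamma_pos_of_pos (by linarith)
        have hyp : 0 < y ^ (s-1) := Real.rpow_pos_of_pos (by linarith) _
        have hG : 0 < Real.Gamma y := Real.Gamma_pos_of_pos (by linarith)
        rw [hrec, hpow]
        have hfac : y ≤ y + s - 1 := by linarith
        have h0 : y + (s - 1) = y + s - 1 := by ring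
        rw [h0] at this hGpos
        nlinarith [Real.rpow_pos_of_pos (by linarith : (0:ℝ) < y) s]
  intro s hs0 y hy
  exact aux ⌈s⌉₊ s hs0 (le_trans (Nat.le_ceil s) (by push_cast; linarith)) y hy


lemma gamma_mono {x y : ℝ} (hx : 2 ≤ x) (hxy : x ≤ y) :
    Real.Gamma x ≤ Real.Gamma y :=
  Real.Gamma_strictMonoOn_Ici.monotoneOn (Set.mem_Ici.2 hx)
    (Set.mem_Ici.2 (le_trans hx hxy)) hxy

lemma summable_main (A B C : ℝ) {d : ℝ} (hd : 2 < d) (N : ℕ) {x : ℝ} (hx : 0 ≤ x) :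
    Summable (fun m : ℕ =>
      |Real.Gamma (A + m) * Real.Gamma (B + m) / Real.Gamma (C + d * m)|
        * ((m : ℝ) + 1) ^ N * x ^ m) := by
  set f : ℕ → ℝ := fun m =>
    |Real.Gamma (A + m) * Real.Gamma (B + m) / Real.Gamma (C + d * m)|
      * ((m : ℝ) + 1) ^ N * x ^ m with hf
  have hd0 : (0:ℝ) < d := by linarith
  apply summable_of_ratio_norm_eventually_le (r := 1/2) (by norm_num)
  -- eventual good conditions
  have hinf : Tendsto (fun m : ℕ => C + d * m) atTop atTop := by
    apply tendsto_atTop_add_const_left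
    exact (tendsto_natCast_atTop_atTop (R := ℝ)).const_mul_atTop hd0
  have hinf2 : Tendsto (fun m : ℕ => (C + d * m) ^ (d - 2)) atTop atTop :=
    (tendsto_rpow_atTop (by linarith : (0:ℝ) < d - 2)).comp hinf
  have hA : ∀ᶠ m : ℕ in atTop, 2 ≤ A + m := by
    have := tendsto_atTop_add_const_left atTop A (tendsto_natCast_atTop_atTop (R := ℝ))
    exact this.eventually_ge_atTop 2
  have hB : ∀ᶠ m : ℕ in atTop, 2 ≤ B + m := by
    have := tendsto_atTop_add_const_left atTop B (tendsto_natCast_atTop_atTop (R := ℝ))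
    exact this.eventually_ge_atTop 2
  have hC : ∀ᶠ m : ℕ in atTop, 2 ≤ C + d * m := hinf.eventually_ge_atTop 2
  have hAC : ∀ᶠ m : ℕ in atTop, A + m ≤ C + d * m := by
    have h1 : Tendsto (fun m : ℕ => (C - A) + (d - 1) * m) atTop atTop := by
      apply tendsto_atTop_add_const_left
      exact (tendsto_natCast_atTop_atTop (R := ℝ)).const_mul_atTop (by linarith)
    filter_upwards [h1.eventually_ge_atTop 0] with m hm
    nlinarith [hm]
  have hBC : ∀ᶠ m : ℕ in atTop, B + m ≤ C + d * m := by
    have h1 : Tendsto (fun m : ℕ => (C - B) + (d - 1) * m) atTop atTop := by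
      apply tendsto_atTop_add_const_left
      exact (tendsto_natCast_atTop_atTop (R := ℝ)).const_mul_atTop (by linarith)
    filter_upwards [h1.eventually_ge_atTop 0] with m hm
    nlinarith [hm]
  have hpow : ∀ᶠ m : ℕ in atTop, 3 * 2 ^ N * x + 1 ≤ (C + d * m) ^ (d - 2) :=
    hinf2.eventually_ge_atTop _
  filter_upwards [hA, hB, hC, hAC, hBC, hpow] with m h2A h2B h2C hACm hBCm hpm
  -- notation
  set a := A + (m : ℝ) with ha
  set b := B + (m : ℝ) with hb
  set g := C + d * (m : ℝ) with hg
  have hga : 0 < Real.Gamma a := Real.Gamma_pos_of_pos (by linarith)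
  have hgb : 0 < Real.Gamma b := Real.Gamma_pos_of_pos (by linarith)
  have hgg : 0 < Real.Gamma g := Real.Gamma_pos_of_pos (by linarith)
  have hgd : 0 < Real.Gamma (g + d) := Real.Gamma_pos_of_pos (by linarith)
  have hglb : 2/3 * g ^ d * Real.Gamma g ≤ Real.Gamma (g + d) :=
    gamma_lb d hd0.le g h2C
  have hrw1 : A + ((m:ℕ)+1 : ℕ) = a + 1 := by push_cast; ring
  have hrw2 : B + ((m:ℕ)+1 : ℕ) = b + 1 := by push_cast; ring
  have hrw3 : C + d * ((m:ℕ)+1 : ℕ) = g + d := by push_cast; ring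
  have hfm1 : f (m+1) = (a * Real.Gamma a) * (b * Real.Gamma b) / Real.Gamma (g + d)
      * ((m : ℝ) + 2) ^ N * x ^ (m + 1) := by
    rw [hf]
    simp only [hrw1, hrw2, hrw3]
    rw [Real.Gamma_add_one (by linarith : a ≠ 0), Real.Gamma_add_one (by linarith : b ≠ 0)]
    rw [abs_of_nonneg (by positivity)]
    push_cast; ring_nf
  have hfm : f m = Real.Gamma a * Real.Gamma b / Real.Gamma g * ((m : ℝ) + 1) ^ N * x ^ m := by
    rw [hf]
    beta_reduce
    rw [abs_of_nonneg (by positivity)]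
  rw [Real.norm_eq_abs, Real.norm_eq_abs, hfm1, hfm,
    abs_of_nonneg (by positivity), abs_of_nonneg (by positivity)]
  -- main estimate
  have hgd2 : (0:ℝ) < g ^ (d - 2) := Real.rpow_pos_of_pos (by linarith) _
  have hsplit : g ^ d = g ^ 2 * g ^ (d - 2) := by
    rw [← Real.rpow_natCast g 2, ← Real.rpow_add (by linarith : (0:ℝ) < g)]
    norm_num
  have h2N : ((m:ℝ) + 2) ^ N ≤ 2 ^ N * ((m:ℝ) + 1) ^ N := by
    rw [← mul_pow]
    exact pow_le_pow_left₀ (by positivity) (by linarith) N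
  have hab : a * b ≤ g ^ 2 := by nlinarith
  have hkey : (a * Real.Gamma a) * (b * Real.Gamma b) * (((m : ℝ) + 2) ^ N * x ^ (m+1))
      * Real.Gamma g
      ≤ 1/2 * (Real.Gamma a * Real.Gamma b * (((m : ℝ) + 1) ^ N * x ^ m))
        * Real.Gamma (g + d) := by
    have step1 : (a * Real.Gamma a) * (b * Real.Gamma b) * (((m : ℝ) + 2) ^ N * x ^ (m+1))
        * Real.Gamma g
        ≤ Real.Gamma a * Real.Gamma b * (g^2 * (2^N * ((m:ℝ)+1)^N) * (x * x^m))
          * Real.Gamma g := by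
      have e1 : (a * Real.Gamma a) * (b * Real.Gamma b) * (((m : ℝ) + 2) ^ N * x ^ (m+1))
          = Real.Gamma a * Real.Gamma b * ((a*b) * ((m:ℝ)+2)^N * (x * x^m)) := by ring
      rw [e1]
      apply mul_le_mul_of_nonneg_right _ hgg.le
      apply mul_le_mul_of_nonneg_left _ (by positivity)
      have : (a*b) * ((m:ℝ)+2)^N ≤ g^2 * (2^N * ((m:ℝ)+1)^N) := by
        calc (a*b) * ((m:ℝ)+2)^N ≤ g^2 * ((m:ℝ)+2)^N := by
              apply mul_le_mul_of_nonneg_right hab (by positivity)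
          _ ≤ g^2 * (2^N * ((m:ℝ)+1)^N) := by
              apply mul_le_mul_of_nonneg_left h2N (by positivity)
      calc (a*b) * ((m:ℝ)+2)^N * (x * x^m) ≤ g^2 * (2^N * ((m:ℝ)+1)^N) * (x * x^m) := by
            apply mul_le_mul_of_nonneg_right this (by positivity)
        _ = g^2 * (2^N * ((m:ℝ)+1)^N) * (x * x^m) := rfl
    have step2 : Real.Gamma a * Real.Gamma b * (g^2 * (2^N * ((m:ℝ)+1)^N) * (x * x^m))
          * Real.Gamma g
        ≤ 1/2 * (Real.Gamma a * Real.Gamma b * (((m : ℝ) + 1) ^ N * x ^ m))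
          * (2/3 * g ^ d * Real.Gamma g) := by
      have e2 : 1/2 * (Real.Gamma a * Real.Gamma b * (((m : ℝ) + 1) ^ N * x ^ m))
          * (2/3 * g ^ d * Real.Gamma g)
          = Real.Gamma a * Real.Gamma b * (g^2 * (((m:ℝ)+1)^N * (g ^ (d-2)/3)) * x^m)
            * Real.Gamma g := by
        rw [hsplit]; ring
      rw [e2]
      apply mul_le_mul_of_nonneg_right _ hgg.le
      apply mul_le_mul_of_nonneg_left _ (by positivity)
      have hx2 : 2^N * x ≤ g ^ (d-2)/3 := by linarith
      calc g^2 * (2^N * ((m:ℝ)+1)^N) * (x * x^m)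
          = g^2 * (((m:ℝ)+1)^N * (2^N * x)) * x^m := by ring
        _ ≤ g^2 * (((m:ℝ)+1)^N * (g ^ (d-2)/3)) * x^m := by
            apply mul_le_mul_of_nonneg_right _ (by positivity)
            apply mul_le_mul_of_nonneg_left _ (by positivity)
            apply mul_le_mul_of_nonneg_left hx2 (by positivity)
      done
    calc (a * Real.Gamma a) * (b * Real.Gamma b) * (((m : ℝ) + 2) ^ N * x ^ (m+1))
        * Real.Gamma g ≤ Real.Gamma a * Real.Gamma b
          * (g^2 * (2^N * ((m:ℝ)+1)^N) * (x * x^m)) * Real.Gamma g := step1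
      _ ≤ 1/2 * (Real.Gamma a * Real.Gamma b * (((m : ℝ) + 1) ^ N * x ^ m))
          * (2/3 * g ^ d * Real.Gamma g) := step2
      _ ≤ 1/2 * (Real.Gamma a * Real.Gamma b * (((m : ℝ) + 1) ^ N * x ^ m))
          * Real.Gamma (g + d) := by
          apply mul_le_mul_of_nonneg_left hglb (by positivity)
  have e3 : a * Real.Gamma a * (b * Real.Gamma b) / Real.Gamma (g+d) * ((m:ℝ)+2)^N * x^(m+1)
      = (a * Real.Gamma a * (b * Real.Gamma b) * (((m:ℝ)+2)^N * x^(m+1))) / Real.Gamma (g+d) := by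
    ring
  have e4 : 1/2 * (Real.Gamma a * Real.Gamma b / Real.Gamma g * ((m:ℝ)+1)^N * x^m)
      = (1/2 * (Real.Gamma a * Real.Gamma b * (((m:ℝ)+1)^N * x^m))) / Real.Gamma g := by
    ring
  rw [e3, e4, div_le_div_iff₀ hgd hgg]
  refine le_trans (le_of_eq (by ring)) (le_trans hkey (le_of_eq (by ring)))


/-- power series with real exponents `e*m + σ` -/
noncomputable def pS (dc : ℕ → ℝ) (e σ : ℝ) (x : ℝ) : ℝ := ∑' m : ℕ, dc m * x ^ (e * m + σ)

/-- coefficients with superexponentially-beating decay -/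
def GoodC (dc : ℕ → ℝ) : Prop :=
  ∀ (N : ℕ) (x : ℝ), 0 ≤ x → Summable (fun m : ℕ => |dc m| * ((m : ℝ) + 1) ^ N * x ^ m)

lemma GoodC.of_le {dc dc' : ℕ → ℝ} (h : GoodC dc) (J : ℕ) (K : ℝ)
    (hle : ∀ᶠ m in atTop, |dc' m| ≤ K * ((m : ℝ) + 1) ^ J * |dc m|) : GoodC dc' := by
  intro N x hx
  apply Summable.of_norm_bounded_eventually_nat
    (g := fun m => K * (|dc m| * ((m : ℝ) + 1) ^ (N + J) * x ^ m))
    ((h (N + J) x hx).mul_left K)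
  filter_upwards [hle] with m hm
  have h1 : ‖|dc' m| * ((m : ℝ) + 1) ^ N * x ^ m‖ = |dc' m| * ((m : ℝ) + 1) ^ N * x ^ m := by
    rw [Real.norm_eq_abs, abs_of_nonneg (by positivity)]
  rw [h1]
  calc |dc' m| * ((m : ℝ) + 1) ^ N * x ^ m
      ≤ (K * ((m : ℝ) + 1) ^ J * |dc m|) * ((m : ℝ) + 1) ^ N * x ^ m := by
        apply mul_le_mul_of_nonneg_right _ (by positivity)
        exact mul_le_mul_of_nonneg_right hm (by positivity)
    _ = K * (|dc m| * ((m : ℝ) + 1) ^ (N + J) * x ^ m) := by rw [pow_add]; ring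

lemma GoodC_atom (A₁ A₂ B c : ℝ) {e : ℝ} (he : 2 < e) :
    GoodC (fun m : ℕ => Real.Gamma (A₁ + m) * Real.Gamma (A₂ + m)
      / Real.Gamma (B + e * m) * c ^ m) := by
  intro N x hx
  have h := summable_main A₁ A₂ B he N (x := |c| * x) (by positivity)
  apply Summable.of_norm_bounded h
  intro m
  rw [Real.norm_eq_abs, abs_of_nonneg (by positivity), abs_mul, abs_pow, mul_pow]
  apply le_of_eq; ring

lemma rpow_split {z : ℝ} (hz : 0 < z) (e σ : ℝ) (m : ℕ) :
    z ^ (e * m + σ) = z ^ σ * (z ^ e) ^ m := by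
  rw [Real.rpow_add hz, ← Real.rpow_natCast (z ^ e) m, ← Real.rpow_mul hz.le]
  ring_nf

lemma GoodC.summable_pS {dc : ℕ → ℝ} (h : GoodC dc) (e σ : ℝ) {z : ℝ} (hz : 0 < z) :
    Summable (fun m : ℕ => dc m * z ^ (e * m + σ)) := by
  apply Summable.of_norm_bounded
    (g := fun m => z ^ σ * (|dc m| * ((m : ℝ) + 1) ^ 0 * (z ^ e) ^ m))
    (((h 0 (z ^ e) (Real.rpow_nonneg hz.le e))).mul_left _)
  intro m
  rw [Real.norm_eq_abs, abs_mul, rpow_split hz, abs_mul,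
    abs_of_nonneg (Real.rpow_pos_of_pos hz σ).le,
    abs_of_nonneg (pow_nonneg (Real.rpow_pos_of_pos hz e).le m), pow_zero]
  apply le_of_eq; ring

lemma GoodC.prodWeight {dc : ℕ → ℝ} (h : GoodC dc) {e : ℝ} (he : 0 < e) (σ : ℝ) (j : ℕ) :
    GoodC (fun m => dc m * ∏ l ∈ Finset.range j, (e * m + σ - l)) := by
  apply h.of_le j ((e + |σ| + j) ^ j)
  filter_upwards with m
  rw [abs_mul]
  have hb : |∏ l ∈ Finset.range j, (e * m + σ - l)| ≤ ((e + |σ| + j) * ((m : ℝ) + 1)) ^ j := by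
    rw [Finset.abs_prod]
    calc ∏ l ∈ Finset.range j, |e * m + σ - l|
        ≤ ∏ _l ∈ Finset.range j, ((e + |σ| + j) * ((m : ℝ) + 1)) := ?_
      _ = ((e + |σ| + j) * ((m : ℝ) + 1)) ^ j := by
          rw [Finset.prod_const, Finset.card_range]
    apply Finset.prod_le_prod (fun _ _ => abs_nonneg _)
    intro l hl
    have hl' : (l : ℝ) ≤ j := by
      have := Finset.mem_range.1 hl
      exact_mod_cast this.le
    have h1 : |e * m + σ - l| ≤ e * m + |σ| + l := by
      have h2 := abs_add_le (e * m + σ) (-(l : ℝ))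
      rw [← sub_eq_add_neg] at h2
      have h3 : |e * m + σ| ≤ e * m + |σ| := by
        calc |e * (m:ℝ) + σ| ≤ |e * (m:ℝ)| + |σ| := abs_add_le _ _
          _ = e * (m:ℝ) + |σ| := by
              rw [abs_of_nonneg (by positivity : (0:ℝ) ≤ e * (m:ℝ))]
      simp only [abs_neg, Nat.abs_cast] at h2
      linarith
    have : e * m + |σ| + l ≤ (e + |σ| + j) * ((m : ℝ) + 1) := by
      have h4 : (0:ℝ) ≤ |σ| := abs_nonneg _
      have h5 : (0:ℝ) ≤ (m:ℝ) := Nat.cast_nonneg m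
      nlinarith
    linarith
  calc |dc m| * |∏ l ∈ Finset.range j, (e * m + σ - l)|
      ≤ |dc m| * (((e + |σ| + j)) * ((m : ℝ) + 1)) ^ j := by
        exact mul_le_mul_of_nonneg_left hb (abs_nonneg _)
    _ = (e + |σ| + j) ^ j * ((m : ℝ) + 1) ^ j * |dc m| := by rw [mul_pow]; ring

lemma hasDerivAt_pS {dc : ℕ → ℝ} (h : GoodC dc) {e : ℝ} (he : 0 < e) (σ : ℝ) {z : ℝ}
    (hz : 0 < z) :
    HasDerivAt (pS dc e σ) (pS (fun m => dc m * (e * m + σ)) e (σ - 1) z) z := by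
  have key : HasDerivAt (fun y => ∑' m : ℕ, dc m * y ^ (e * m + σ))
      (∑' m : ℕ, dc m * ((e * m + σ) * z ^ (e * m + σ - 1))) z := by
    set t : Set ℝ := Set.Ioo (z / 2) (2 * z) with ht
    have hzt : z ∈ t := by constructor <;> [linarith; linarith]
    set P : ℝ := (z / 2) ^ (σ - 1) + (2 * z) ^ (σ - 1) with hP
    set Q : ℝ := (2 * z) ^ e with hQ
    have hQ0 : 0 ≤ Q := Real.rpow_nonneg (by linarith) _
    apply hasDerivAt_tsum_of_isPreconnected
      (u := fun m => (e + |σ - 1| + 1) * P * (|dc m| * ((m : ℝ) + 1) ^ 1 * Q ^ m))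
      (((h 1 Q hQ0)).mul_left _) isOpen_Ioo isPreconnected_Ioo
      (g := fun m y => dc m * y ^ (e * m + σ))
      (g' := fun m y => dc m * ((e * m + σ) * y ^ (e * m + σ - 1)))
      ?_ ?_ hzt (h.summable_pS e σ hz) hzt
    · intro m y hy
      have hy0 : y ≠ 0 := by have := hy.1; intro hc; rw [hc] at this; linarith
      exact (Real.hasDerivAt_rpow_const (Or.inl hy0)).const_mul (dc m)
    · intro m y hy
      obtain ⟨hy1, hy2⟩ := hy
      have hy0 : 0 < y := by linarith
      have hsp : y ^ (e * m + σ - 1) = y ^ (σ - 1) * (y ^ e) ^ m := by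
        rw [show e * (m:ℝ) + σ - 1 = e * m + (σ - 1) by ring]
        exact rpow_split hy0 e (σ - 1) m
      have hb1 : y ^ (σ - 1) ≤ P := by
        rcases le_or_gt 0 (σ - 1) with hσ | hσ
        · have h1 : y ^ (σ - 1) ≤ (2 * z) ^ (σ - 1) :=
            Real.rpow_le_rpow hy0.le hy2.le hσ
          have h2 : 0 ≤ (z / 2) ^ (σ - 1) := Real.rpow_nonneg (by linarith) _
          rw [hP]; linarith
        · have h1 : y ^ (σ - 1) ≤ (z / 2) ^ (σ - 1) :=
            Real.rpow_le_rpow_of_nonpos (by linarith) hy1.le hσ.le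
          have h2 : 0 ≤ (2 * z) ^ (σ - 1) := Real.rpow_nonneg (by linarith) _
          rw [hP]; linarith
      have hb2 : (y ^ e) ^ m ≤ Q ^ m := by
        apply pow_le_pow_left₀ (Real.rpow_nonneg hy0.le _)
        exact Real.rpow_le_rpow hy0.le hy2.le he.le
      have hb3 : |e * m + σ| ≤ (e + |σ - 1| + 1) * ((m : ℝ) + 1) := by
        have h3 : |e * m + σ| ≤ e * m + |σ| := by
          calc |e * (m:ℝ) + σ| ≤ |e * (m:ℝ)| + |σ| := abs_add_le _ _
            _ = e * (m:ℝ) + |σ| := by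
                rw [abs_of_nonneg (by positivity : (0:ℝ) ≤ e * (m:ℝ))]
        have h4 : |σ| ≤ |σ - 1| + 1 := by
          have := abs_add_le (σ - 1) (1:ℝ)
          simpa using this
        have h5 : (0:ℝ) ≤ (m:ℝ) := Nat.cast_nonneg m
        have h6 : (0:ℝ) ≤ |σ - 1| := abs_nonneg _
        nlinarith
      rw [Real.norm_eq_abs, abs_mul, abs_mul, hsp]
      have hy3 : 0 ≤ y ^ (σ - 1) := Real.rpow_nonneg hy0.le _
      have hy4 : 0 ≤ (y ^ e) ^ m := pow_nonneg (Real.rpow_nonneg hy0.le _) m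
      rw [abs_of_nonneg (by positivity : (0:ℝ) ≤ y ^ (σ-1) * (y^e)^m)]
      calc |dc m| * (|e * m + σ| * (y ^ (σ - 1) * (y ^ e) ^ m))
          ≤ |dc m| * ((e + |σ - 1| + 1) * ((m : ℝ) + 1) * (P * Q ^ m)) := by
            apply mul_le_mul_of_nonneg_left _ (abs_nonneg _)
            have hP0 : 0 ≤ P := by
              rw [hP]
              have := Real.rpow_nonneg (show (0:ℝ) ≤ z/2 by linarith) (σ-1)
              have := Real.rpow_nonneg (show (0:ℝ) ≤ 2*z by linarith) (σ-1)
              linarith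
            apply mul_le_mul hb3 _ (by positivity) (by positivity)
            exact mul_le_mul hb1 hb2 hy4 hP0
        _ = (e + |σ - 1| + 1) * P * (|dc m| * ((m : ℝ) + 1) ^ 1 * Q ^ m) := by ring
  have hcong : ∑' m : ℕ, dc m * ((e * m + σ) * z ^ (e * m + σ - 1))
      = pS (fun m => dc m * (e * m + σ)) e (σ - 1) z := by
    apply tsum_congr
    intro m
    rw [show e * (m:ℝ) + σ - 1 = e * m + (σ - 1) by ring]
    ring
  rw [← hcong]
  exact key


lemma pS_congr {dc dc' : ℕ → ℝ} {e σ σ' : ℝ} (h : ∀ m, dc m = dc' m) (hσ : σ = σ') :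
    pS dc e σ = pS dc' e σ' := by
  subst hσ; unfold pS
  exact funext fun x => tsum_congr fun m => by rw [h m]

/-- iterated derivatives of a finite sum of `pS` functions, on `(0,∞)`. -/
lemma iteratedDeriv_sum_pS {ι : Type*} (S : Finset ι) (dc : ι → ℕ → ℝ) (σ : ι → ℝ)
    {e : ℝ} (he : 0 < e) (hg : ∀ i ∈ S, GoodC (dc i)) (j : ℕ) :
    ∀ z : ℝ, 0 < z →
      iteratedDeriv j (fun x => ∑ i ∈ S, pS (dc i) e (σ i) x) z
        = ∑ i ∈ S, pS (fun m => dc i m * ∏ l ∈ Finset.range j, (e * m + σ i - l))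
            e (σ i - j) z := by
  induction j with
  | zero =>
    intro z hz
    rw [iteratedDeriv_zero]
    refine Finset.sum_congr rfl fun i _ => congrFun (pS_congr ?_ ?_) z
    · intro m; simp
    · simp
  | succ j ih =>
    intro z hz
    rw [iteratedDeriv_succ]
    have hder : ∀ y : ℝ, 0 < y → HasDerivAt
        (fun x => ∑ i ∈ S, pS (fun m => dc i m * ∏ l ∈ Finset.range j, (e * m + σ i - l))
            e (σ i - j) x)
        (∑ i ∈ S, pS (fun m => (dc i m * ∏ l ∈ Finset.range j, (e * m + σ i - l))
            * (e * m + (σ i - j))) e (σ i - j - 1) y) y := by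
      intro y hy
      exact HasDerivAt.fun_sum fun i hi =>
        hasDerivAt_pS ((hg i hi).prodWeight he (σ i) j) he (σ i - (j:ℝ)) hy
    have hev : iteratedDeriv j (fun x => ∑ i ∈ S, pS (dc i) e (σ i) x)
        =ᶠ[nhds z] (fun x => ∑ i ∈ S, pS (fun m => dc i m
            * ∏ l ∈ Finset.range j, (e * m + σ i - l)) e (σ i - j) x) := by
      filter_upwards [isOpen_Ioi.mem_nhds (Set.mem_Ioi.2 hz)] with y hy
      exact ih y hy
    rw [hev.deriv_eq, (hder z hz).deriv]
    refine Finset.sum_congr rfl fun i _ => congrFun (pS_congr ?_ ?_) z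
    · intro m; rw [Finset.prod_range_succ]; push_cast; ring
    · push_cast; ring


lemma beta_integrable {c μ x : ℝ} (hc : 0 < c) (hμ : -1 < μ) (hx : 0 < x) :
    IntervalIntegrable (fun s => (x - s) ^ (c - 1) * s ^ μ) volume 0 x := by
  have hmeas : Measurable (fun s : ℝ => (x - s) ^ (c - 1) * s ^ μ) :=
    ((measurable_const.sub measurable_id).pow measurable_const).mul
      (measurable_id.pow measurable_const)
  rw [intervalIntegrable_iff_integrableOn_Ioc_of_le hx.le]
  have hsplit : Set.Ioc (0:ℝ) x = Set.Ioc 0 (x/2) ∪ Set.Ioc (x/2) x :=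
    (Set.Ioc_union_Ioc_eq_Ioc (by linarith) (by linarith)).symm
  rw [hsplit, integrableOn_union]
  constructor
  · -- near 0 : bound by M * s ^ μ
    set M : ℝ := (x/2) ^ (c-1) + x ^ (c-1) with hM
    have hg : IntegrableOn (fun s : ℝ => M * s ^ μ) (Set.Ioc 0 (x/2)) volume := by
      have := (intervalIntegral.intervalIntegrable_rpow' (a := 0) (b := x/2) hμ)
      rw [intervalIntegrable_iff_integrableOn_Ioc_of_le (by linarith)] at this
      exact this.const_mul M
    apply Integrable.mono' hg (hmeas.aestronglyMeasurable)
    rw [ae_restrict_iff' measurableSet_Ioc]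
    filter_upwards with s hs
    obtain ⟨hs1, hs2⟩ := hs
    have h1 : (0:ℝ) ≤ x - s := by linarith
    have h2 : 0 ≤ (x - s) ^ (c-1) := Real.rpow_nonneg h1 _
    have h3 : 0 ≤ s ^ μ := Real.rpow_nonneg hs1.le _
    rw [Real.norm_eq_abs, abs_of_nonneg (mul_nonneg h2 h3)]
    apply mul_le_mul_of_nonneg_right _ h3
    rcases le_or_gt 0 (c - 1) with hcc | hcc
    · have : (x - s) ^ (c-1) ≤ x ^ (c-1) := Real.rpow_le_rpow h1 (by linarith) hcc
      have h4 : (0:ℝ) ≤ (x/2) ^ (c-1) := Real.rpow_nonneg (by linarith) _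
      rw [hM]; linarith
    · have : (x - s) ^ (c-1) ≤ (x/2) ^ (c-1) :=
        Real.rpow_le_rpow_of_nonpos (by linarith) (by linarith) hcc.le
      have h4 : (0:ℝ) ≤ x ^ (c-1) := Real.rpow_nonneg (by linarith) _
      rw [hM]; linarith
  · -- near x : bound by M' * (x-s) ^ (c-1)
    set M' : ℝ := (x/2) ^ μ + x ^ μ with hM'
    have hg : IntegrableOn (fun s : ℝ => M' * (x - s) ^ (c-1)) (Set.Ioc (x/2) x) volume := by
      have h0 := intervalIntegral.intervalIntegrable_rpow'
        (a := 0) (b := x/2) (show (-1:ℝ) < c - 1 by linarith)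
      have h1 := h0.comp_sub_left x
      rw [show x - x/2 = x/2 by ring, sub_zero] at h1
      have h2 : IntervalIntegrable (fun s : ℝ => (x - s) ^ (c-1)) volume (x/2) x := h1.symm
      rw [intervalIntegrable_iff_integrableOn_Ioc_of_le (by linarith)] at h2
      exact h2.const_mul M'
    apply Integrable.mono' hg (hmeas.aestronglyMeasurable)
    rw [ae_restrict_iff' measurableSet_Ioc]
    filter_upwards with s hs
    obtain ⟨hs1, hs2⟩ := hs
    have hs0 : (0:ℝ) < s := by linarith
    have h1 : (0:ℝ) ≤ x - s := by linarith
    have h2 : 0 ≤ (x - s) ^ (c-1) := Real.rpow_nonneg h1 _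
    have h3 : 0 ≤ s ^ μ := Real.rpow_nonneg hs0.le _
    rw [Real.norm_eq_abs, abs_of_nonneg (mul_nonneg h2 h3), mul_comm ((x - s) ^ (c-1))]
    · apply mul_le_mul_of_nonneg_right _ h2
      rcases le_or_gt 0 μ with hcc | hcc
      · have : s ^ μ ≤ x ^ μ := Real.rpow_le_rpow hs0.le hs2 hcc
        have h4 : (0:ℝ) ≤ (x/2) ^ μ := Real.rpow_nonneg (by linarith) _
        rw [hM']; linarith
      · have : s ^ μ ≤ (x/2) ^ μ :=
          Real.rpow_le_rpow_of_nonpos (by linarith) hs1.le hcc.le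
        have h4 : (0:ℝ) ≤ x ^ μ := Real.rpow_nonneg (by linarith) _
        rw [hM']; linarith

lemma beta_val {c μ x : ℝ} (hc : 0 < c) (hμ : -1 < μ) (hx : 0 < x) :
    ∫ s in (0:ℝ)..x, (x - s) ^ (c - 1) * s ^ μ
      = Real.Gamma c * Real.Gamma (μ + 1) / Real.Gamma (c + μ + 1) * x ^ (μ + c) := by
  have hs : 0 < ((μ:ℂ) + 1).re := by
    simp only [Complex.add_re, Complex.ofReal_re, Complex.one_re]; linarith
  have ht : 0 < ((c:ℂ)).re := by simpa using hc
  have hscaled := Complex.betaIntegral_scaled ((μ:ℂ) + 1) (c:ℂ) hx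
  have hbeta := Complex.Gamma_mul_Gamma_eq_betaIntegral hs ht
  -- the real integral is the real part of the complex one
  have h1 : ((∫ s in (0:ℝ)..x, (x - s) ^ (c - 1) * s ^ μ : ℝ) : ℂ)
      = ∫ s in (0:ℝ)..x, (s:ℂ) ^ ((μ:ℂ) + 1 - 1) * ((x:ℂ) - s) ^ ((c:ℂ) - 1) := by
    rw [← intervalIntegral.integral_ofReal]
    rw [intervalIntegral.integral_of_le hx.le, intervalIntegral.integral_of_le hx.le]
    refine setIntegral_congr_fun measurableSet_Ioc (fun s hsx => ?_)
    obtain ⟨hs1, hs2⟩ := hsx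
    have h0s : (0:ℝ) ≤ s := hs1.le
    have hxs : (0:ℝ) ≤ x - s := by linarith
    have e1 : ((μ:ℂ) + 1 - 1) = ((μ:ℝ) : ℂ) := by ring_nf
    have e1' : ((c:ℂ) - 1) = ((c - 1 : ℝ) : ℂ) := by push_cast; ring
    have e1'' : ((x:ℂ) - (s:ℂ)) = ((x - s : ℝ) : ℂ) := by push_cast; ring
    rw [e1, e1', e1'', ← Complex.ofReal_cpow h0s, ← Complex.ofReal_cpow hxs]
    push_cast
    ring
  have hI := h1.trans hscaled
  -- now rewrite the RHS in real terms
  have hgne : Complex.Gamma ((μ:ℂ) + 1 + c) ≠ 0 := by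
    have : ((μ:ℂ) + 1 + c) = ((μ + 1 + c : ℝ) : ℂ) := by push_cast; ring
    rw [this, Complex.Gamma_ofReal]
    exact_mod_cast (Real.Gamma_pos_of_pos (by linarith : 0 < μ + 1 + c)).ne'
  have hB : Complex.betaIntegral ((μ:ℂ) + 1) (c:ℂ)
      = Complex.Gamma ((μ:ℂ) + 1) * Complex.Gamma (c:ℂ) / Complex.Gamma ((μ:ℂ) + 1 + c) := by
    rw [eq_div_iff hgne]
    linear_combination - hbeta
  rw [hB] at hI
  have e2 : ((μ:ℂ) + 1 + c - 1) = (((μ + c : ℝ)) : ℂ) := by push_cast; ring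
  rw [e2] at hI
  have e3 : ((μ:ℂ) + 1) = (((μ + 1 : ℝ)) : ℂ) := by norm_cast
  rw [e3, ← Complex.ofReal_cpow hx.le, Complex.Gamma_ofReal, Complex.Gamma_ofReal] at hI
  have e4 : (((μ + 1 : ℝ) : ℂ) + (c:ℂ)) = (((μ + 1 + c : ℝ)) : ℂ) := by push_cast; ring
  rw [e4, Complex.Gamma_ofReal] at hI
  have h2 : ((∫ s in (0:ℝ)..x, (x - s) ^ (c - 1) * s ^ μ : ℝ) : ℂ)
      = ((x ^ (μ + c) * (Real.Gamma (μ + 1) * Real.Gamma c / Real.Gamma (μ + 1 + c)) : ℝ) : ℂ) := by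
    rw [hI]; push_cast; ring
  have h3 := Complex.ofReal_inj.1 h2
  rw [h3]
  rw [show c + μ + 1 = μ + 1 + c by ring]
  ring


lemma ev_linear (a b T : ℝ) (ha : 0 < a) : ∀ᶠ m : ℕ in atTop, T ≤ a * m + b := by
  have h1 : Tendsto (fun m : ℕ => a * m + b) atTop atTop := by
    apply tendsto_atTop_add_const_right
    exact (tendsto_natCast_atTop_atTop (R := ℝ)).const_mul_atTop ha
  exact h1.eventually_ge_atTop T

lemma GoodC.abs {dc : ℕ → ℝ} (h : GoodC dc) : GoodC (fun m => |dc m|) := by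
  intro N x hx
  simpa only [abs_abs] using h N x hx

lemma hμm {e σ : ℝ} (he : 0 < e) (hσ : -1 < σ) (m : ℕ) : -1 < e * m + σ := by
  have : (0:ℝ) ≤ e * m := by positivity
  linarith

/-- value of the integral of the norm of one kernel term -/
lemma kernel_term_int {dc : ℕ → ℝ} {e σ c x : ℝ} (he : 0 < e) (hσ : -1 < σ)
    (hc : 0 < c) (hx : 0 < x) (m : ℕ) :
    IntegrableOn (fun s => (x - s) ^ (c - 1) * (dc m * s ^ (e * m + σ)))
      (Set.Ioc 0 x) volume := by
  have hb := beta_integrable hc (hμm he hσ m) hx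
  rw [intervalIntegrable_iff_integrableOn_Ioc_of_le hx.le] at hb
  have hfe : (fun s : ℝ => (x - s) ^ (c - 1) * (dc m * s ^ (e * m + σ)))
      = fun s : ℝ => dc m * ((x - s) ^ (c - 1) * s ^ (e * m + σ)) := by
    funext s; ring
  rw [IntegrableOn, hfe]
  exact hb.const_mul (dc m)

lemma kernel_term_norm_val {dc : ℕ → ℝ} {e σ c x : ℝ} (he : 0 < e) (hσ : -1 < σ)
    (hc : 0 < c) (hx : 0 < x) (m : ℕ) :
    ∫ s in Set.Ioc (0:ℝ) x, ‖(x - s) ^ (c - 1) * (dc m * s ^ (e * m + σ))‖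
      = |dc m| * (Real.Gamma c * Real.Gamma (e * m + σ + 1)
          / Real.Gamma (c + (e * m + σ) + 1) * x ^ (e * m + σ + c)) := by
  have h1 : ∀ s ∈ Set.Ioc (0:ℝ) x, ‖(x - s) ^ (c - 1) * (dc m * s ^ (e * m + σ))‖
      = |dc m| * ((x - s) ^ (c - 1) * s ^ (e * m + σ)) := by
    intro s hs
    obtain ⟨hs1, hs2⟩ := hs
    have h2 : (0:ℝ) ≤ (x - s) ^ (c-1) := Real.rpow_nonneg (by linarith) _
    have h3 : (0:ℝ) ≤ s ^ (e * m + σ) := Real.rpow_nonneg hs1.le _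
    rw [Real.norm_eq_abs, abs_mul, abs_mul, abs_of_nonneg h2, abs_of_nonneg h3]
    ring
  rw [setIntegral_congr_fun measurableSet_Ioc h1, MeasureTheory.integral_const_mul,
    ← intervalIntegral.integral_of_le hx.le, beta_val hc (hμm he hσ m) hx]

lemma kernel_norm_summable {dc : ℕ → ℝ} (h : GoodC dc) {e σ c x : ℝ} (he : 0 < e)
    (hσ : -1 < σ) (hc : 0 < c) (hx : 0 < x) :
    Summable (fun m : ℕ => |dc m| * (Real.Gamma c * Real.Gamma (e * m + σ + 1)
      / Real.Gamma (c + (e * m + σ) + 1) * x ^ (e * m + σ + c))) := by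
  apply Summable.of_norm_bounded_eventually_nat
    (g := fun m => (Real.Gamma c * x ^ (σ + c)) * (|dc m| * ((m:ℝ)+1) ^ 0 * (x ^ e) ^ m))
    ((h 0 (x ^ e) (Real.rpow_nonneg hx.le e)).mul_left _)
  filter_upwards [ev_linear e (σ + 1) 2 he] with m hm
  have hG1 : 0 < Real.Gamma (e * m + σ + 1) := Real.Gamma_pos_of_pos (by linarith)
  have hG2 : 0 < Real.Gamma (c + (e * m + σ) + 1) := Real.Gamma_pos_of_pos (by linarith)
  have hGc : 0 < Real.Gamma c := Real.Gamma_pos_of_pos hc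
  have hmono : Real.Gamma (e * m + σ + 1) ≤ Real.Gamma (c + (e * m + σ) + 1) := by
    apply gamma_mono (by linarith)
    linarith
  have hratio : Real.Gamma (e * m + σ + 1) / Real.Gamma (c + (e * m + σ) + 1) ≤ 1 := by
    rw [div_le_one hG2]; exact hmono
  have hratio0 : 0 ≤ Real.Gamma (e * m + σ + 1) / Real.Gamma (c + (e * m + σ) + 1) :=
    le_of_lt (div_pos hG1 hG2)
  have hsp : x ^ (e * m + σ + c) = x ^ (σ + c) * (x ^ e) ^ m := by
    rw [show e * (m:ℝ) + σ + c = e * m + (σ + c) by ring]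
    exact rpow_split hx e (σ + c) m
  rw [Real.norm_eq_abs, abs_of_nonneg (by positivity), hsp, pow_zero, mul_div_assoc]
  set R := Real.Gamma (e * m + σ + 1) / Real.Gamma (c + (e * m + σ) + 1)
  have hxσ : 0 ≤ x ^ (σ + c) := Real.rpow_nonneg hx.le _
  have hxe : 0 ≤ (x ^ e) ^ m := pow_nonneg (Real.rpow_nonneg hx.le _) _
  calc |dc m| * (Real.Gamma c * R * (x ^ (σ + c) * (x ^ e) ^ m))
      = (Real.Gamma c * x ^ (σ + c) * (|dc m| * (x ^ e) ^ m)) * R := by ring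
    _ ≤ (Real.Gamma c * x ^ (σ + c) * (|dc m| * (x ^ e) ^ m)) * 1 := by
        apply mul_le_mul_of_nonneg_left hratio (by positivity)
    _ = Real.Gamma c * x ^ (σ + c) * (|dc m| * 1 * (x ^ e) ^ m) := by ring

lemma GoodC.betaFactor {dc : ℕ → ℝ} (h : GoodC dc) {e : ℝ} (he : 0 < e) (σ : ℝ)
    {c : ℝ} (hc : 0 < c) (hσ : -1 < σ) :
    GoodC (fun m => dc m * (Real.Gamma c * Real.Gamma (e * m + σ + 1)
      / Real.Gamma (c + (e * m + σ) + 1))) := by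
  apply h.of_le 0 (Real.Gamma c)
  filter_upwards [ev_linear e (σ + 1) 2 he] with m hm
  have hG1 : 0 < Real.Gamma (e * m + σ + 1) := Real.Gamma_pos_of_pos (by linarith)
  have hG2 : 0 < Real.Gamma (c + (e * m + σ) + 1) := Real.Gamma_pos_of_pos (by linarith)
  have hGc : 0 < Real.Gamma c := Real.Gamma_pos_of_pos hc
  have hratio : Real.Gamma (e * m + σ + 1) / Real.Gamma (c + (e * m + σ) + 1) ≤ 1 := by
    rw [div_le_one hG2]
    exact gamma_mono (by linarith) (by linarith)
  have hR0 : 0 ≤ Real.Gamma (e * m + σ + 1) / Real.Gamma (c + (e * m + σ) + 1) :=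
    le_of_lt (div_pos hG1 hG2)
  rw [abs_mul, pow_zero, mul_one]
  rw [abs_of_nonneg (by positivity : (0:ℝ) ≤ Real.Gamma c * Real.Gamma (e * m + σ + 1)
      / Real.Gamma (c + (e * m + σ) + 1))]
  rw [mul_div_assoc]
  calc |dc m| * (Real.Gamma c * (Real.Gamma (e * m + σ + 1) / Real.Gamma (c + (e * m + σ) + 1)))
      ≤ |dc m| * (Real.Gamma c * 1) := by
        apply mul_le_mul_of_nonneg_left _ (abs_nonneg _)
        exact mul_le_mul_of_nonneg_left hratio hGc.le
    _ = Real.Gamma c * |dc m| := by ring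

/-- the fractional integral of a `pS` series termwise -/
lemma integral_pS {dc : ℕ → ℝ} (h : GoodC dc) {e : ℝ} (he : 0 < e) {σ : ℝ} (hσ : -1 < σ)
    {c : ℝ} (hc : 0 < c) {x : ℝ} (hx : 0 < x) :
    ∫ s in (0:ℝ)..x, (x - s) ^ (c - 1) * pS dc e σ s
      = pS (fun m => dc m * (Real.Gamma c * Real.Gamma (e * m + σ + 1)
          / Real.Gamma (c + (e * m + σ) + 1))) e (σ + c) x := by
  set F : ℕ → ℝ → ℝ := fun m s => (x - s) ^ (c - 1) * (dc m * s ^ (e * m + σ)) with hF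
  have hFi : ∀ m, IntegrableOn (F m) (Set.Ioc 0 x) volume :=
    fun m => kernel_term_int he hσ hc hx m
  have hsum : Summable (fun m => ∫ s in Set.Ioc (0:ℝ) x, ‖F m s‖) := by
    have : (fun m => ∫ s in Set.Ioc (0:ℝ) x, ‖F m s‖)
        = fun m => |dc m| * (Real.Gamma c * Real.Gamma (e * m + σ + 1)
          / Real.Gamma (c + (e * m + σ) + 1) * x ^ (e * m + σ + c)) := by
      funext m; exact kernel_term_norm_val he hσ hc hx m
    rw [this]
    exact kernel_norm_summable h he hσ hc hx
  rw [intervalIntegral.integral_of_le hx.le]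
  have hstep1 : ∫ s in Set.Ioc (0:ℝ) x, (x - s) ^ (c - 1) * pS dc e σ s
      = ∫ s in Set.Ioc (0:ℝ) x, ∑' m, F m s := by
    refine setIntegral_congr_fun measurableSet_Ioc (fun s hs => ?_)
    rw [pS, tsum_mul_left]
  rw [hstep1, ← integral_tsum_of_summable_integral_norm hFi hsum]
  apply tsum_congr
  intro m
  have h1 : ∫ s in Set.Ioc (0:ℝ) x, F m s = ∫ s in (0:ℝ)..x, F m s :=
    (intervalIntegral.integral_of_le hx.le).symm
  rw [h1]
  have h2 : ∫ s in (0:ℝ)..x, F m s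
      = dc m * ∫ s in (0:ℝ)..x, (x - s) ^ (c - 1) * s ^ (e * m + σ) := by
    rw [← intervalIntegral.integral_const_mul]
    apply intervalIntegral.integral_congr
    intro s _
    simp only [hF]
    ring
  rw [h2, beta_val hc (hμm he hσ m) hx,
    show e * (m:ℝ) + σ + c = e * m + (σ + c) by ring]
  ring


lemma intervalIntegrable_kernel_pS {dc : ℕ → ℝ} (h : GoodC dc) {e : ℝ} (he : 0 < e)
    {σ : ℝ} (hσ : -1 < σ) {c : ℝ} (hc : 0 < c) {x : ℝ} (hx : 0 < x) :
    IntervalIntegrable (fun s => (x - s) ^ (c - 1) * pS dc e σ s) volume 0 x := by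
  rw [intervalIntegrable_iff_integrableOn_Ioc_of_le hx.le,
    integrableOn_Ioc_iff_integrableOn_Ioo]
  set G : ℕ → ℝ → ℝ := fun m s => (x - s) ^ (c - 1) * (|dc m| * s ^ (e * m + σ)) with hG
  set v : ℕ → ℝ := fun m => |dc m| * (Real.Gamma c * Real.Gamma (e * m + σ + 1)
      / Real.Gamma (c + (e * m + σ) + 1) * x ^ (e * m + σ + c)) with hv
  have hGnn : ∀ s ∈ Set.Ioo (0:ℝ) x, ∀ m, 0 ≤ G m s := by
    intro s hs m
    have h1 : (0:ℝ) ≤ (x - s) ^ (c - 1) := Real.rpow_nonneg (by linarith [hs.2]) _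
    have h2 : (0:ℝ) ≤ s ^ (e * m + σ) := Real.rpow_nonneg hs.1.le _
    positivity
  have hGint : ∀ m, IntegrableOn (G m) (Set.Ioo 0 x) volume := fun m =>
    (kernel_term_int (dc := fun m => |dc m|) he hσ hc hx m).mono_set Set.Ioo_subset_Ioc_self
  have hGval : ∀ m, ∫ s in Set.Ioo (0:ℝ) x, G m s = v m := by
    intro m
    simp only [hv, hG]
    rw [← MeasureTheory.integral_Ioc_eq_integral_Ioo,
      ← kernel_term_norm_val (dc := dc) he hσ hc hx m]
    refine setIntegral_congr_fun measurableSet_Ioc (fun s hs => ?_)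
    have h3 : (0:ℝ) ≤ (x - s) ^ (c - 1) := Real.rpow_nonneg (by linarith [hs.2]) _
    have h4 : (0:ℝ) ≤ s ^ (e * m + σ) := Real.rpow_nonneg hs.1.le _
    rw [Real.norm_eq_abs, abs_mul, abs_mul, abs_of_nonneg h3, abs_of_nonneg h4]
  have hvsum : Summable v := by
    have h5 := kernel_norm_summable (dc := fun m => |dc m|) h.abs he hσ hc hx
    simpa only [abs_abs] using h5
  constructor
  · -- measurability via continuity
    apply ContinuousOn.aestronglyMeasurable _ measurableSet_Ioo
    intro s hs
    have hK : ContinuousAt (fun s : ℝ => (x - s) ^ (c - 1)) s := by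
      apply ContinuousAt.rpow_const ((continuous_const.sub continuous_id).continuousAt)
      left
      show x - s ≠ 0
      have := hs.2; intro hcon; rw [sub_eq_zero] at hcon; rw [← hcon] at this
      exact lt_irrefl _ this
    have hpS : ContinuousAt (pS dc e σ) s := (hasDerivAt_pS h he σ hs.1).continuousAt
    exact (hK.mul hpS).continuousWithinAt
  · -- finiteness
    rw [hasFiniteIntegral_iff_norm]
    have key : ∫⁻ s in Set.Ioo (0:ℝ) x, ENNReal.ofReal ‖(x - s) ^ (c - 1) * pS dc e σ s‖
        ≤ ∫⁻ s in Set.Ioo (0:ℝ) x, ∑' m, ENNReal.ofReal (G m s) := by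
      apply lintegral_mono_ae
      rw [ae_restrict_iff' measurableSet_Ioo]
      filter_upwards with s hs
      have hs0 : 0 < s := hs.1
      have hKnn : (0:ℝ) ≤ (x - s) ^ (c - 1) := Real.rpow_nonneg (by linarith [hs.2]) _
      have hnormsum : Summable (fun m => ‖dc m * s ^ (e * m + σ)‖) := by
        have := (h.abs.summable_pS e σ hs0)
        apply this.congr
        intro m
        rw [Real.norm_eq_abs, abs_mul, abs_of_nonneg (Real.rpow_nonneg hs0.le _)]
      have h6 : ‖(x - s) ^ (c - 1) * pS dc e σ s‖ ≤ ∑' m, G m s := by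
        rw [Real.norm_eq_abs, abs_mul, abs_of_nonneg hKnn]
        calc (x - s) ^ (c - 1) * |pS dc e σ s|
            ≤ (x - s) ^ (c - 1) * ∑' m, ‖dc m * s ^ (e * m + σ)‖ := by
              apply mul_le_mul_of_nonneg_left _ hKnn
              rw [pS, ← Real.norm_eq_abs]
              exact norm_tsum_le_tsum_norm hnormsum
          _ = ∑' m, G m s := by
              rw [← tsum_mul_left]
              apply tsum_congr
              intro m
              rw [Real.norm_eq_abs, abs_mul, abs_of_nonneg (Real.rpow_nonneg hs0.le _)]
        done
      calc ENNReal.ofReal ‖(x - s) ^ (c - 1) * pS dc e σ s‖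
          ≤ ENNReal.ofReal (∑' m, G m s) := ENNReal.ofReal_le_ofReal h6
        _ = ∑' m, ENNReal.ofReal (G m s) := by
            apply ENNReal.ofReal_tsum_of_nonneg (fun m => hGnn s hs m)
            have h7 := (h.abs.summable_pS e σ hs0).mul_left ((x - s) ^ (c - 1))
            exact h7.congr fun m => rfl
    have key2 : ∫⁻ s in Set.Ioo (0:ℝ) x, ∑' m, ENNReal.ofReal (G m s)
        = ∑' m, ∫⁻ s in Set.Ioo (0:ℝ) x, ENNReal.ofReal (G m s) := by
      apply lintegral_tsum
      intro m
      apply AEMeasurable.ennreal_ofReal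
      exact ((hGint m).aestronglyMeasurable.aemeasurable)
    have key3 : ∀ m, ∫⁻ s in Set.Ioo (0:ℝ) x, ENNReal.ofReal (G m s)
        = ENNReal.ofReal (v m) := by
      intro m
      rw [← MeasureTheory.ofReal_integral_eq_lintegral_ofReal (hGint m)]
      · rw [hGval m]
      · filter_upwards [ae_restrict_mem measurableSet_Ioo] with s hs
        exact hGnn s hs m
    have key4 : ∑' m, ENNReal.ofReal (v m) = ENNReal.ofReal (∑' m, v m) := by
      rw [ENNReal.ofReal_tsum_of_nonneg _ hvsum]
      intro m
      rw [hv]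
      have hem : (0:ℝ) ≤ e * m := by positivity
      have h1 : 0 < Real.Gamma (e * m + σ + 1) := Real.Gamma_pos_of_pos (by linarith)
      have h2 : 0 < Real.Gamma (c + (e * m + σ) + 1) := Real.Gamma_pos_of_pos (by linarith)
      have h3 : 0 < Real.Gamma c := Real.Gamma_pos_of_pos hc
      have h4 : (0:ℝ) ≤ x ^ (e * m + σ + c) := Real.rpow_nonneg hx.le _
      positivity
    calc ∫⁻ s in Set.Ioo (0:ℝ) x, ENNReal.ofReal ‖(x - s) ^ (c - 1) * pS dc e σ s‖
        ≤ ∑' m, ∫⁻ s in Set.Ioo (0:ℝ) x, ENNReal.ofReal (G m s) := by rw [← key2]; exact key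
      _ = ∑' m, ENNReal.ofReal (v m) := by exact tsum_congr key3
      _ = ENNReal.ofReal (∑' m, v m) := key4
      _ < ⊤ := ENNReal.ofReal_lt_top


lemma iteratedDeriv_congr_open {U : Set ℝ} (hU : IsOpen U) {f g : ℝ → ℝ}
    (hfg : ∀ x ∈ U, f x = g x) (j : ℕ) : ∀ x ∈ U, iteratedDeriv j f x = iteratedDeriv j g x := by
  induction j with
  | zero => simpa using hfg
  | succ j ih =>
    intro x hx
    rw [iteratedDeriv_succ, iteratedDeriv_succ]
    apply Filter.EventuallyEq.deriv_eq
    filter_upwards [hU.mem_nhds hx] with y hy using ih y hy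

lemma rlDeriv_sum_pS {ι : Type*} (S : Finset ι) (dc : ι → ℕ → ℝ) (σ : ι → ℝ)
    {α : ℝ} (hα : 1 < α) (hαn : α < ⌈α⌉₊)
    {e : ℝ} (he : 0 < e)
    (hg : ∀ i ∈ S, GoodC (dc i)) (hσ : ∀ i ∈ S, -1 < σ i)
    (φfn : ℝ → ℝ) (hφ : ∀ x : ℝ, 0 < x → φfn x = ∑ i ∈ S, pS (dc i) e (σ i) x) :
    ∀ z : ℝ, 0 < z → rlDeriv α φfn z
      = (1 / Real.Gamma ((⌈α⌉₊ : ℝ) - α)) * ∑ i ∈ S,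
          pS (fun m => dc i m * (Real.Gamma ((⌈α⌉₊ : ℝ) - α) * Real.Gamma (e * m + σ i + 1)
              / Real.Gamma (((⌈α⌉₊ : ℝ) - α) + (e * m + σ i) + 1))
            * ∏ l ∈ Finset.range ⌈α⌉₊, (e * m + (σ i + ((⌈α⌉₊ : ℝ) - α)) - l))
            e (σ i + ((⌈α⌉₊ : ℝ) - α) - ⌈α⌉₊) z := by
  intro z hz
  set n : ℕ := ⌈α⌉₊ with hn
  set cst : ℝ := (n : ℝ) - α with hcst
  have hcst0 : 0 < cst := by rw [hcst]; linarith
  have hFeq : ∀ x : ℝ, 0 < x →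
      (∫ s in (0:ℝ)..x, (x - s) ^ (cst - 1) * φfn s)
        = ∑ i ∈ S, pS (fun m => dc i m * (Real.Gamma cst * Real.Gamma (e * m + σ i + 1)
            / Real.Gamma (cst + (e * m + σ i) + 1))) e (σ i + cst) x := by
    intro x hx
    have h1 : (∫ s in (0:ℝ)..x, (x - s) ^ (cst - 1) * φfn s)
        = ∫ s in (0:ℝ)..x, ∑ i ∈ S, (x - s) ^ (cst - 1) * pS (dc i) e (σ i) s := by
      rw [intervalIntegral.integral_of_le hx.le, intervalIntegral.integral_of_le hx.le]
      refine setIntegral_congr_fun measurableSet_Ioc (fun s hs => ?_)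
      rw [hφ s hs.1, Finset.mul_sum]
    rw [h1, intervalIntegral.integral_finset_sum
      (fun i hi => intervalIntegrable_kernel_pS (hg i hi) he (hσ i hi) hcst0 hx)]
    exact Finset.sum_congr rfl fun i hi =>
      integral_pS (hg i hi) he (hσ i hi) hcst0 hx
  have hunfold : rlDeriv α φfn z = (1 / Real.Gamma cst) *
      iteratedDeriv n (fun x => ∫ s in (0:ℝ)..x, (x - s) ^ (cst - 1) * φfn s) z := by
    rw [rlDeriv]
  rw [hunfold]
  congr 1
  have hcongr := iteratedDeriv_congr_open isOpen_Ioi (U := Set.Ioi 0)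
    (f := fun x => ∫ s in (0:ℝ)..x, (x - s) ^ (cst - 1) * φfn s)
    (g := fun x => ∑ i ∈ S, pS (fun m => dc i m * (Real.Gamma cst * Real.Gamma (e * m + σ i + 1)
        / Real.Gamma (cst + (e * m + σ i) + 1))) e (σ i + cst) x)
    (fun x hx => hFeq x hx) n z (Set.mem_Ioi.2 hz)
  rw [hcongr]
  have h2 := iteratedDeriv_sum_pS S
    (fun i => fun m => dc i m * (Real.Gamma cst * Real.Gamma (e * m + σ i + 1)
        / Real.Gamma (cst + (e * m + σ i) + 1)))
    (fun i => σ i + cst) he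
    (fun i hi => (hg i hi).betaFactor he (σ i) hcst0 (hσ i hi)) n z hz
  rw [h2]


lemma const_mul_pS (a : ℝ) (dc : ℕ → ℝ) (e σ x : ℝ) :
    a * pS dc e σ x = pS (fun m => a * dc m) e σ x := by
  rw [pS, pS, ← tsum_mul_left]
  exact tsum_congr fun m => by ring

lemma pS_mul_z {dc : ℕ → ℝ} {e σ z : ℝ} (hz : 0 < z) :
    z * pS dc e (σ - 1) z = pS dc e σ z := by
  rw [pS, pS, ← tsum_mul_left]
  refine tsum_congr fun m => ?_
  rw [show e * (m:ℝ) + σ = (e * m + (σ - 1)) + 1 by ring, Real.rpow_add_one hz.ne']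
  ring

lemma pS_add {d1 d2 : ℕ → ℝ} (h1 : GoodC d1) (h2 : GoodC d2) (e σ : ℝ) {z : ℝ} (hz : 0 < z) :
    pS d1 e σ z + pS d2 e σ z = pS (fun m => d1 m + d2 m) e σ z := by
  rw [pS, pS, pS, ← Summable.tsum_add (h1.summable_pS e σ hz) (h2.summable_pS e σ hz)]
  exact tsum_congr fun m => by ring

lemma GoodC.affineWeight {dc : ℕ → ℝ} (h : GoodC dc) (A B : ℝ) :
    GoodC (fun m => dc m * (A + B * m)) := by
  apply h.of_le 1 (|A| + |B|)
  filter_upwards with m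
  rw [abs_mul, pow_one]
  have h1 : |A + B * m| ≤ (|A| + |B|) * ((m:ℝ) + 1) := by
    have h2 : |A + B * m| ≤ |A| + |B| * m := by
      calc |A + B * m| ≤ |A| + |B * m| := abs_add_le _ _
        _ = |A| + |B| * m := by rw [abs_mul, Nat.abs_cast]
    have h3 : (0:ℝ) ≤ (m:ℝ) := Nat.cast_nonneg m
    have h4 : (0:ℝ) ≤ |A| := abs_nonneg A
    have h5 : (0:ℝ) ≤ |B| := abs_nonneg B
    nlinarith
  calc |dc m| * |A + B * m| ≤ |dc m| * ((|A| + |B|) * ((m:ℝ) + 1)) :=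
        mul_le_mul_of_nonneg_left h1 (abs_nonneg _)
    _ = (|A| + |B|) * ((m:ℝ) + 1) * |dc m| := by ring

lemma GoodC.constMul {dc : ℕ → ℝ} (h : GoodC dc) (a : ℝ) :
    GoodC (fun m => a * dc m) := by
  apply h.of_le 0 |a|
  filter_upwards with m
  rw [abs_mul, pow_zero]
  apply le_of_eq; ring

lemma gamma_prod : ∀ (n : ℕ) (V : ℝ), 0 < V - n + 1 →
    ∏ l ∈ Finset.range n, (V - l) = Real.Gamma (V + 1) / Real.Gamma (V - n + 1) := by
  intro n
  induction n with
  | zero =>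
    intro V hV
    simp only [Finset.range_zero, Finset.prod_empty, Nat.cast_zero, sub_zero]
    rw [eq_comm, div_eq_one_iff_eq]
    exact (Real.Gamma_pos_of_pos (by push_cast at hV; linarith)).ne'
  | succ n ih =>
    intro V hV
    have hV' : (0:ℝ) < V - n := by push_cast at hV; push_cast; linarith
    have hVn : 0 < V - n + 1 := by linarith
    rw [Finset.prod_range_succ, ih V hVn]
    have hrec : Real.Gamma (V - n + 1) = (V - n) * Real.Gamma (V - n) := by
      exact Real.Gamma_add_one hV'.ne'
    rw [hrec]
    have h1 : Real.Gamma (V - n) > 0 := Real.Gamma_pos_of_pos hV'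
    have h2 : V - (n:ℝ) ≠ 0 := hV'.ne'
    have h3 : V - ((n:ℕ)+1:ℕ) + 1 = V - n := by push_cast; ring
    rw [h3]
    field_simp

lemma deriv_sum_pS {ι : Type*} (S : Finset ι) (dc : ι → ℕ → ℝ) (σ : ι → ℝ)
    {e : ℝ} (he : 0 < e) (hg : ∀ i ∈ S, GoodC (dc i)) (ψfn : ℝ → ℝ)
    (hψ : ∀ x : ℝ, 0 < x → ψfn x = ∑ i ∈ S, pS (dc i) e (σ i) x) :
    ∀ z : ℝ, 0 < z → deriv ψfn z
      = ∑ i ∈ S, pS (fun m => dc i m * (e * m + σ i)) e (σ i - 1) z := by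
  intro z hz
  have hev : ψfn =ᶠ[nhds z] (fun x => ∑ i ∈ S, pS (dc i) e (σ i) x) := by
    filter_upwards [isOpen_Ioi.mem_nhds (Set.mem_Ioi.2 hz)] with y hy
    exact hψ y hy
  rw [hev.deriv_eq]
  exact (HasDerivAt.fun_sum fun i hi => hasDerivAt_pS (hg i hi) he (σ i) hz).deriv

lemma atom_eq (A₁ A₂ B Cc β e x : ℝ) (hx : 0 < x) :
    x ^ β * genWright ![A₁, A₂, 1] ![1, 1, 1] ![B] ![e] (Cc * x ^ e)
      = pS (fun m => Real.Gamma (A₁ + m) * Real.Gamma (A₂ + m) / Real.Gamma (B + e * m)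
          * Cc ^ m) e β x := by
  rw [genWright, pS, ← tsum_mul_left]
  refine tsum_congr fun m => ?_
  simp only [Fin.prod_univ_three, Fin.prod_univ_one, Matrix.cons_val_zero, Matrix.cons_val_one,
    Matrix.head_cons, Matrix.cons_val_two, Matrix.tail_cons]
  have hfact : Real.Gamma (1 + 1 * (m:ℝ)) = (Nat.factorial m : ℝ) := by
    rw [show (1 : ℝ) + 1 * (m:ℝ) = (m:ℝ) + 1 by ring]
    exact_mod_cast Real.Gamma_nat_eq_factorial m
  have hfne : (Nat.factorial m : ℝ) ≠ 0 := by exact_mod_cast (Nat.factorial_pos m).ne'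
  rw [hfact]
  have hsp : x ^ (e * m + β) = x ^ β * (x ^ e) ^ m := rpow_split hx e β m
  rw [hsp, mul_pow]
  have e1 : A₁ + 1 * (m:ℝ) = A₁ + m := by ring
  have e2 : A₂ + 1 * (m:ℝ) = A₂ + m := by ring
  rw [e1, e2]
  simp only [mul_one, div_eq_mul_inv]
  have hcan : (Nat.factorial m : ℝ) * ((Nat.factorial m : ℝ))⁻¹ = 1 := mul_inv_cancel₀ hfne
  linear_combination (x ^ β * Real.Gamma (A₁ + (m:ℝ)) * Real.Gamma (A₂ + (m:ℝ))
    * (Real.Gamma (B + e * (m:ℝ)))⁻¹ * Cc ^ m * (x ^ e) ^ m) * hcan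


lemma coeff_true (α st₁ st₂ a₁ b₁ b₂ C : ℝ) (n k m : ℕ)
    (hα : 1 < α) (hαn : α < n) (hn1 : (n:ℝ) < α + 1)
    (hk1 : 1 ≤ k) (hkn : k ≤ n)
    (ha₁ : a₁ = -st₁ * b₁)
    (hne : (1/2 - (k:ℝ)/(2*α) - st₁/2) + (m:ℝ) ≠ 0) :
    (1 / Real.Gamma ((n:ℝ) - α)) *
      ((2*b₁*C) * (Real.Gamma ((3/2 - (k:ℝ)/(2*α) - st₁/2) + m)
          * Real.Gamma ((1 - (k:ℝ)/(2*α) - st₂/2) + m)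
          / Real.Gamma ((1 + 2*α - (k:ℝ)) + 2*α*m) * (4*b₁*b₂)^m)
        * (Real.Gamma ((n:ℝ) - α) * Real.Gamma (2*α*m + (2*α - (k:ℝ)) + 1)
            / Real.Gamma (((n:ℝ) - α) + (2*α*m + (2*α - (k:ℝ))) + 1))
        * ∏ l ∈ Finset.range n, (2*α*m + ((2*α - (k:ℝ)) + ((n:ℝ) - α)) - l))
    = a₁ * (C * (Real.Gamma ((1/2 - (k:ℝ)/(2*α) - st₁/2) + m)
          * Real.Gamma ((1 - (k:ℝ)/(2*α) - st₂/2) + m)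
          / Real.Gamma ((1 + α - (k:ℝ)) + 2*α*m) * (4*b₁*b₂)^m))
      + (b₁/α) * (C * (Real.Gamma ((1/2 - (k:ℝ)/(2*α) - st₁/2) + m)
          * Real.Gamma ((1 - (k:ℝ)/(2*α) - st₂/2) + m)
          / Real.Gamma ((1 + α - (k:ℝ)) + 2*α*m) * (4*b₁*b₂)^m)
        * (2*α*m + (α - (k:ℝ)))) := by
  have hα0 : (0:ℝ) < α := by linarith
  have hα0' : α ≠ 0 := hα0.ne'
  have hkr : (k:ℝ) ≤ (n:ℝ) := Nat.cast_le.2 hkn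
  have hkα : (k:ℝ) < α + 1 := by linarith
  have hm0 : (0:ℝ) ≤ 2*α*m := by positivity
  have hcst : (0:ℝ) < (n:ℝ) - α := by linarith
  have hVpos : (0:ℝ) < (2*α*m + ((2*α - (k:ℝ)) + ((n:ℝ) - α))) - n + 1 := by linarith
  rw [gamma_prod n _ hVpos]
  have hrec : Real.Gamma ((3/2 - (k:ℝ)/(2*α) - st₁/2) + m)
      = ((1/2 - (k:ℝ)/(2*α) - st₁/2) + m) * Real.Gamma ((1/2 - (k:ℝ)/(2*α) - st₁/2) + m) := by
    rw [show (3/2 - (k:ℝ)/(2*α) - st₁/2) + (m:ℝ)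
        = ((1/2 - (k:ℝ)/(2*α) - st₁/2) + m) + 1 by ring]
    exact Real.Gamma_add_one hne
  rw [hrec, ha₁]
  rw [show (1 + 2*α - (k:ℝ)) + 2*α*m = 2*α*m + (2*α - (k:ℝ)) + 1 by ring]
  rw [show (2*α*m + ((2*α - (k:ℝ)) + ((n:ℝ) - α))) + 1
      = ((n:ℝ) - α) + (2*α*m + (2*α - (k:ℝ))) + 1 by ring]
  rw [show (2*α*m + ((2*α - (k:ℝ)) + ((n:ℝ) - α))) - (n:ℝ) + 1
      = (1 + α - (k:ℝ)) + 2*α*m by ring]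
  have hG1 : Real.Gamma (2*α*m + (2*α - (k:ℝ)) + 1) ≠ 0 :=
    (Real.Gamma_pos_of_pos (by linarith)).ne'
  have hG2 : Real.Gamma (((n:ℝ) - α) + (2*α*m + (2*α - (k:ℝ))) + 1) ≠ 0 :=
    (Real.Gamma_pos_of_pos (by linarith)).ne'
  have hG3 : Real.Gamma ((1 + α - (k:ℝ)) + 2*α*m) ≠ 0 :=
    (Real.Gamma_pos_of_pos (by linarith)).ne'
  have hGc : Real.Gamma ((n:ℝ) - α) ≠ 0 := (Real.Gamma_pos_of_pos hcst).ne'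
  generalize Real.Gamma ((1/2 - (k:ℝ)/(2*α) - st₁/2) + m) = G1
  generalize Real.Gamma ((1 - (k:ℝ)/(2*α) - st₂/2) + m) = G2
  generalize Real.Gamma (2*α*m + (2*α - (k:ℝ)) + 1) = G3 at hG1 ⊢
  generalize Real.Gamma (((n:ℝ) - α) + (2*α*m + (2*α - (k:ℝ))) + 1) = G4 at hG2 ⊢
  generalize Real.Gamma ((1 + α - (k:ℝ)) + 2*α*m) = G5 at hG3 ⊢
  generalize Real.Gamma ((n:ℝ) - α) = G6 at hGc ⊢
  field_simp
  ring

lemma coeff_false (α st₁ st₂ a₁ b₁ b₂ C : ℝ) (n k j : ℕ)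
    (hα : 1 < α) (hαn : α < n) (hn1 : (n:ℝ) < α + 1)
    (hk1 : 1 ≤ k) (hkn : k ≤ n)
    (ha₁ : a₁ = -st₁ * b₁)
    (hne : (1 - (k:ℝ)/(2*α) - st₁/2) + (j:ℝ) ≠ 0) :
    (1 / Real.Gamma ((n:ℝ) - α)) *
      (C * (Real.Gamma ((1 - (k:ℝ)/(2*α) - st₁/2) + ((j:ℝ)+1))
          * Real.Gamma ((1/2 - (k:ℝ)/(2*α) - st₂/2) + ((j:ℝ)+1))
          / Real.Gamma ((1 + α - (k:ℝ)) + 2*α*((j:ℝ)+1)) * (4*b₁*b₂)^(j+1))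
        * (Real.Gamma ((n:ℝ) - α) * Real.Gamma (2*α*((j:ℝ)+1) + (α - (k:ℝ)) + 1)
            / Real.Gamma (((n:ℝ) - α) + (2*α*((j:ℝ)+1) + (α - (k:ℝ))) + 1))
        * ∏ l ∈ Finset.range n, (2*α*((j:ℝ)+1) + ((α - (k:ℝ)) + ((n:ℝ) - α)) - l))
    = a₁ * ((2*b₂*C) * (Real.Gamma ((1 - (k:ℝ)/(2*α) - st₁/2) + j)
          * Real.Gamma ((3/2 - (k:ℝ)/(2*α) - st₂/2) + j)
          / Real.Gamma ((1 + 2*α - (k:ℝ)) + 2*α*j) * (4*b₁*b₂)^j))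
      + (b₁/α) * ((2*b₂*C) * (Real.Gamma ((1 - (k:ℝ)/(2*α) - st₁/2) + j)
          * Real.Gamma ((3/2 - (k:ℝ)/(2*α) - st₂/2) + j)
          / Real.Gamma ((1 + 2*α - (k:ℝ)) + 2*α*j) * (4*b₁*b₂)^j)
        * (2*α*j + (2*α - (k:ℝ)))) := by
  have hα0 : (0:ℝ) < α := by linarith
  have hα0' : α ≠ 0 := hα0.ne'
  have hkr : (k:ℝ) ≤ (n:ℝ) := Nat.cast_le.2 hkn
  have hkα : (k:ℝ) < α + 1 := by linarith
  have hj0 : (0:ℝ) ≤ 2*α*j := by positivity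
  have hcst : (0:ℝ) < (n:ℝ) - α := by linarith
  have hVpos : (0:ℝ) < (2*α*((j:ℝ)+1) + ((α - (k:ℝ)) + ((n:ℝ) - α))) - n + 1 := by nlinarith
  rw [gamma_prod n _ hVpos]
  have hrec : Real.Gamma ((1 - (k:ℝ)/(2*α) - st₁/2) + ((j:ℝ)+1))
      = ((1 - (k:ℝ)/(2*α) - st₁/2) + j) * Real.Gamma ((1 - (k:ℝ)/(2*α) - st₁/2) + j) := by
    rw [show (1 - (k:ℝ)/(2*α) - st₁/2) + ((j:ℝ)+1)
        = ((1 - (k:ℝ)/(2*α) - st₁/2) + j) + 1 by ring]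
    exact Real.Gamma_add_one hne
  rw [hrec, ha₁]
  rw [show (1/2 - (k:ℝ)/(2*α) - st₂/2) + ((j:ℝ)+1)
      = (3/2 - (k:ℝ)/(2*α) - st₂/2) + (j:ℝ) by ring]
  rw [show (1 + α - (k:ℝ)) + 2*α*((j:ℝ)+1) = 2*α*((j:ℝ)+1) + (α - (k:ℝ)) + 1 by ring]
  rw [show (2*α*((j:ℝ)+1) + ((α - (k:ℝ)) + ((n:ℝ) - α))) + 1
      = ((n:ℝ) - α) + (2*α*((j:ℝ)+1) + (α - (k:ℝ))) + 1 by ring]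
  rw [show (2*α*((j:ℝ)+1) + ((α - (k:ℝ)) + ((n:ℝ) - α))) - (n:ℝ) + 1
      = (1 + 2*α - (k:ℝ)) + 2*α*j by ring]
  rw [pow_succ]
  have hG1 : Real.Gamma (2*α*((j:ℝ)+1) + (α - (k:ℝ)) + 1) ≠ 0 :=
    (Real.Gamma_pos_of_pos (by nlinarith)).ne'
  have hG2 : Real.Gamma (((n:ℝ) - α) + (2*α*((j:ℝ)+1) + (α - (k:ℝ))) + 1) ≠ 0 :=
    (Real.Gamma_pos_of_pos (by nlinarith)).ne'
  have hG3 : Real.Gamma ((1 + 2*α - (k:ℝ)) + 2*α*j) ≠ 0 :=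
    (Real.Gamma_pos_of_pos (by nlinarith)).ne'
  have hGc : Real.Gamma ((n:ℝ) - α) ≠ 0 := (Real.Gamma_pos_of_pos hcst).ne'
  generalize Real.Gamma ((1 - (k:ℝ)/(2*α) - st₁/2) + j) = G1
  generalize Real.Gamma ((3/2 - (k:ℝ)/(2*α) - st₂/2) + j) = G2
  generalize Real.Gamma (2*α*((j:ℝ)+1) + (α - (k:ℝ)) + 1) = G3 at hG1 ⊢
  generalize Real.Gamma (((n:ℝ) - α) + (2*α*((j:ℝ)+1) + (α - (k:ℝ))) + 1) = G4 at hG2 ⊢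
  generalize Real.Gamma ((1 + 2*α - (k:ℝ)) + 2*α*j) = G5 at hG3 ⊢
  generalize Real.Gamma ((n:ℝ) - α) = G6 at hGc ⊢
  field_simp
  ring


lemma GoodC.congr {dc dc' : ℕ → ℝ} (h : GoodC dc) (hfg : ∀ m, dc' m = dc m) : GoodC dc' :=
  fun N x hx => ((h N x hx).congr (fun m => by rw [hfg m]))

theorem key (α : ℝ) (hα : 1 < α) (hαni : ∀ k : ℤ, α ≠ (k : ℝ))
    (a₁ b₁ b₂ : ℝ) (hb₁ : b₁ ≠ 0) (hb₂ : b₂ ≠ 0) (st₁ st₂ : ℝ)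
    (hst₁ : st₁ = -a₁ / b₁)
    (hpos₁ : ∀ k ∈ Finset.Icc 1 ⌈α⌉₊, ∀ j : ℤ, 0 < j → (k : ℝ) / α + st₁ ≠ (j : ℝ))
    (c₁ c₂ : ℕ → ℝ) (φ ψ : ℝ → ℝ)
    (hφ : φ = fun x =>
      (∑ k ∈ Finset.Icc 1 ⌈α⌉₊, c₁ k * x ^ (α - (k : ℝ)) *
        genWright ![1 - (k : ℝ) / (2 * α) - st₁ / 2,
                    1 / 2 - (k : ℝ) / (2 * α) - st₂ / 2, 1] ![1, 1, 1]
          ![1 + α - (k : ℝ)] ![2 * α] (4 * b₁ * b₂ * x ^ (2 * α)))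
      + 2 * b₁ * ∑ k ∈ Finset.Icc 1 ⌈α⌉₊, c₂ k * x ^ (2 * α - (k : ℝ)) *
        genWright ![3 / 2 - (k : ℝ) / (2 * α) - st₁ / 2,
                    1 - (k : ℝ) / (2 * α) - st₂ / 2, 1] ![1, 1, 1]
          ![1 + 2 * α - (k : ℝ)] ![2 * α] (4 * b₁ * b₂ * x ^ (2 * α)))
    (hψ : ψ = fun x =>
      2 * b₂ * (∑ k ∈ Finset.Icc 1 ⌈α⌉₊, c₁ k * x ^ (2 * α - (k : ℝ)) *
        genWright ![1 - (k : ℝ) / (2 * α) - st₁ / 2,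
                    3 / 2 - (k : ℝ) / (2 * α) - st₂ / 2, 1] ![1, 1, 1]
          ![1 + 2 * α - (k : ℝ)] ![2 * α] (4 * b₁ * b₂ * x ^ (2 * α)))
      + ∑ k ∈ Finset.Icc 1 ⌈α⌉₊, c₂ k * x ^ (α - (k : ℝ)) *
        genWright ![1 / 2 - (k : ℝ) / (2 * α) - st₁ / 2,
                    1 - (k : ℝ) / (2 * α) - st₂ / 2, 1] ![1, 1, 1]
          ![1 + α - (k : ℝ)] ![2 * α] (4 * b₁ * b₂ * x ^ (2 * α))) :
    ∀ z : ℝ, 0 < z →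
      rlDeriv α φ z = a₁ * ψ z + (b₁ / α) * z * deriv ψ z := by
  intro z hz
  have hα0 : (0:ℝ) < α := by linarith
  have hαn : α < (⌈α⌉₊ : ℝ) := by
    rcases lt_or_eq_of_le (Nat.le_ceil α) with h | h
    · exact h
    · exact absurd (by exact_mod_cast h : α = ((⌈α⌉₊ : ℤ) : ℝ)) (hαni ⌈α⌉₊)
  have hn1 : ((⌈α⌉₊ : ℕ) : ℝ) < α + 1 := by
    have := Nat.ceil_lt_add_one hα0.le
    exact_mod_cast this
  have he0 : (0:ℝ) < 2 * α := by linarith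
  have he2 : (2:ℝ) < 2 * α := by linarith
  have hcst0 : (0:ℝ) < (⌈α⌉₊ : ℝ) - α := by linarith
  have ha₁ : a₁ = -st₁ * b₁ := by rw [hst₁]; field_simp
  -- index data
  set S : Finset (ℕ × Bool) := (Finset.Icc 1 ⌈α⌉₊) ×ˢ Finset.univ with hS
  set dcF : ℕ × Bool → ℕ → ℝ := fun p => cond p.2
    (fun m => 2*b₁*c₂ p.1 * (Real.Gamma ((3/2 - (p.1:ℝ)/(2*α) - st₁/2) + m)
        * Real.Gamma ((1 - (p.1:ℝ)/(2*α) - st₂/2) + m)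
        / Real.Gamma ((1 + 2*α - (p.1:ℝ)) + 2*α*m) * (4*b₁*b₂)^m))
    (fun m => c₁ p.1 * (Real.Gamma ((1 - (p.1:ℝ)/(2*α) - st₁/2) + m)
        * Real.Gamma ((1/2 - (p.1:ℝ)/(2*α) - st₂/2) + m)
        / Real.Gamma ((1 + α - (p.1:ℝ)) + 2*α*m) * (4*b₁*b₂)^m)) with hdcF
  set σF : ℕ × Bool → ℝ := fun p => cond p.2 (2*α - (p.1:ℝ)) (α - (p.1:ℝ)) with hσF
  set dcP : ℕ × Bool → ℕ → ℝ := fun p => cond p.2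
    (fun m => c₂ p.1 * (Real.Gamma ((1/2 - (p.1:ℝ)/(2*α) - st₁/2) + m)
        * Real.Gamma ((1 - (p.1:ℝ)/(2*α) - st₂/2) + m)
        / Real.Gamma ((1 + α - (p.1:ℝ)) + 2*α*m) * (4*b₁*b₂)^m))
    (fun m => 2*b₂*c₁ p.1 * (Real.Gamma ((1 - (p.1:ℝ)/(2*α) - st₁/2) + m)
        * Real.Gamma ((3/2 - (p.1:ℝ)/(2*α) - st₂/2) + m)
        / Real.Gamma ((1 + 2*α - (p.1:ℝ)) + 2*α*m) * (4*b₁*b₂)^m)) with hdcP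
  set σP : ℕ × Bool → ℝ := fun p => cond p.2 (α - (p.1:ℝ)) (2*α - (p.1:ℝ)) with hσP
  have hgF : ∀ p ∈ S, GoodC (dcF p) := by
    rintro ⟨k, b⟩ _
    cases b
    · exact (GoodC_atom _ _ _ _ he2).constMul (c₁ k)
    · exact (GoodC_atom _ _ _ _ he2).constMul (2*b₁*c₂ k)
  have hgP : ∀ p ∈ S, GoodC (dcP p) := by
    rintro ⟨k, b⟩ _
    cases b
    · exact (GoodC_atom _ _ _ _ he2).constMul (2*b₂*c₁ k)
    · exact (GoodC_atom _ _ _ _ he2).constMul (c₂ k)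
  have hkmem : ∀ p : ℕ × Bool, p ∈ S → 1 ≤ p.1 ∧ p.1 ≤ ⌈α⌉₊ := by
    intro p hp
    have := (Finset.mem_product.1 hp).1
    exact Finset.mem_Icc.1 this
  have hσFb : ∀ p ∈ S, -1 < σF p := by
    rintro ⟨k, b⟩ hp
    obtain ⟨hk1, hkn⟩ := hkmem _ hp
    have hkr : (k:ℝ) ≤ (⌈α⌉₊:ℝ) := Nat.cast_le.2 hkn
    cases b <;> simp only [hσF, cond] <;> [skip; skip] <;> linarith
  have hσPb : ∀ p ∈ S, -1 < σP p := by
    rintro ⟨k, b⟩ hp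
    obtain ⟨hk1, hkn⟩ := hkmem _ hp
    have hkr : (k:ℝ) ≤ (⌈α⌉₊:ℝ) := Nat.cast_le.2 hkn
    cases b <;> simp only [hσP, cond] <;> [skip; skip] <;> linarith
  -- φ as sum of power series
  have hφS : ∀ x : ℝ, 0 < x → φ x = ∑ p ∈ S, pS (dcF p) (2*α) (σF p) x := by
    intro x hx
    rw [hφ]
    beta_reduce
    rw [hS, Finset.sum_product, Finset.mul_sum, ← Finset.sum_add_distrib]
    refine Finset.sum_congr rfl fun k _ => ?_
    rw [Fintype.sum_bool]
    have hA : c₁ k * x ^ (α - (k : ℝ)) *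
        genWright ![1 - (k : ℝ) / (2 * α) - st₁ / 2,
                    1 / 2 - (k : ℝ) / (2 * α) - st₂ / 2, 1] ![1, 1, 1]
          ![1 + α - (k : ℝ)] ![2 * α] (4 * b₁ * b₂ * x ^ (2 * α))
        = pS (dcF (k, false)) (2*α) (σF (k, false)) x := by
      rw [mul_assoc, atom_eq _ _ _ _ _ _ x hx, const_mul_pS]
      rfl
    have hB : 2 * b₁ * (c₂ k * x ^ (2 * α - (k : ℝ)) *
        genWright ![3 / 2 - (k : ℝ) / (2 * α) - st₁ / 2,
                    1 - (k : ℝ) / (2 * α) - st₂ / 2, 1] ![1, 1, 1]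
          ![1 + 2 * α - (k : ℝ)] ![2 * α] (4 * b₁ * b₂ * x ^ (2 * α)))
        = pS (dcF (k, true)) (2*α) (σF (k, true)) x := by
      rw [show 2 * b₁ * (c₂ k * x ^ (2 * α - (k : ℝ)) *
          genWright ![3 / 2 - (k : ℝ) / (2 * α) - st₁ / 2,
                      1 - (k : ℝ) / (2 * α) - st₂ / 2, 1] ![1, 1, 1]
            ![1 + 2 * α - (k : ℝ)] ![2 * α] (4 * b₁ * b₂ * x ^ (2 * α)))
          = 2*b₁*c₂ k * (x ^ (2 * α - (k : ℝ)) *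
          genWright ![3 / 2 - (k : ℝ) / (2 * α) - st₁ / 2,
                      1 - (k : ℝ) / (2 * α) - st₂ / 2, 1] ![1, 1, 1]
            ![1 + 2 * α - (k : ℝ)] ![2 * α] (4 * b₁ * b₂ * x ^ (2 * α))) by ring,
        atom_eq _ _ _ _ _ _ x hx, const_mul_pS]
      rfl
    rw [hA, hB]
    ring
  -- ψ as sum of power series
  have hψS : ∀ x : ℝ, 0 < x → ψ x = ∑ p ∈ S, pS (dcP p) (2*α) (σP p) x := by
    intro x hx
    rw [hψ]
    beta_reduce
    rw [hS, Finset.sum_product, Finset.mul_sum, ← Finset.sum_add_distrib]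
    refine Finset.sum_congr rfl fun k _ => ?_
    rw [Fintype.sum_bool]
    have hA : 2 * b₂ * (c₁ k * x ^ (2 * α - (k : ℝ)) *
        genWright ![1 - (k : ℝ) / (2 * α) - st₁ / 2,
                    3 / 2 - (k : ℝ) / (2 * α) - st₂ / 2, 1] ![1, 1, 1]
          ![1 + 2 * α - (k : ℝ)] ![2 * α] (4 * b₁ * b₂ * x ^ (2 * α)))
        = pS (dcP (k, false)) (2*α) (σP (k, false)) x := by
      rw [show 2 * b₂ * (c₁ k * x ^ (2 * α - (k : ℝ)) *
          genWright ![1 - (k : ℝ) / (2 * α) - st₁ / 2,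
                      3 / 2 - (k : ℝ) / (2 * α) - st₂ / 2, 1] ![1, 1, 1]
            ![1 + 2 * α - (k : ℝ)] ![2 * α] (4 * b₁ * b₂ * x ^ (2 * α)))
          = 2*b₂*c₁ k * (x ^ (2 * α - (k : ℝ)) *
          genWright ![1 - (k : ℝ) / (2 * α) - st₁ / 2,
                      3 / 2 - (k : ℝ) / (2 * α) - st₂ / 2, 1] ![1, 1, 1]
            ![1 + 2 * α - (k : ℝ)] ![2 * α] (4 * b₁ * b₂ * x ^ (2 * α))) by ring,
        atom_eq _ _ _ _ _ _ x hx, const_mul_pS]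
      rfl
    have hB : c₂ k * x ^ (α - (k : ℝ)) *
        genWright ![1 / 2 - (k : ℝ) / (2 * α) - st₁ / 2,
                    1 - (k : ℝ) / (2 * α) - st₂ / 2, 1] ![1, 1, 1]
          ![1 + α - (k : ℝ)] ![2 * α] (4 * b₁ * b₂ * x ^ (2 * α))
        = pS (dcP (k, true)) (2*α) (σP (k, true)) x := by
      rw [mul_assoc, atom_eq _ _ _ _ _ _ x hx, const_mul_pS]
      rfl
    rw [hA, hB]
    ring
  -- apply the two main machines
  have hL := rlDeriv_sum_pS S dcF σF hα hαn he0 hgF hσFb φ hφS z hz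
  have hD := deriv_sum_pS S dcP σP he0 hgP ψ hψS z hz
  rw [hL, hψS z hz, hD, Finset.mul_sum, Finset.mul_sum, Finset.mul_sum,
    ← Finset.sum_add_distrib]
  refine Finset.sum_congr rfl ?_
  rintro ⟨k, b⟩ hp
  obtain ⟨hk1, hkn⟩ := hkmem _ hp
  have hkr : (k:ℝ) ≤ (⌈α⌉₊:ℝ) := Nat.cast_le.2 hkn
  have hGP := hgP _ hp
  have hRHS : a₁ * pS (dcP (k, b)) (2*α) (σP (k, b)) z
      + b₁ / α * z * pS (fun m => dcP (k, b) m * (2*α*m + σP (k, b))) (2*α)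
          (σP (k, b) - 1) z
      = pS (fun m => a₁ * dcP (k, b) m
          + b₁ / α * (dcP (k, b) m * (2*α*m + σP (k, b)))) (2*α) (σP (k, b)) z := by
    rw [const_mul_pS, show b₁ / α * z * pS (fun m => dcP (k, b) m * (2*α*m + σP (k, b)))
        (2*α) (σP (k, b) - 1) z
        = b₁ / α * (z * pS (fun m => dcP (k, b) m * (2*α*m + σP (k, b))) (2*α)
            (σP (k, b) - 1) z) by ring, pS_mul_z hz, const_mul_pS]
    refine pS_add (hGP.constMul a₁) ?_ _ _ hz
    have h1 : GoodC (fun m => dcP (k, b) m * (σP (k, b) + 2*α*m)) :=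
      hGP.affineWeight (σP (k, b)) (2*α)
    have h2 : GoodC (fun m => dcP (k, b) m * (2*α*m + σP (k, b))) :=
      h1.congr (fun m => by ring)
    exact h2.constMul (b₁ / α)
  rw [hRHS, const_mul_pS]
  -- now split on b
  cases b
  · -- the shifted case
    have hneF : ∀ j : ℕ, (1 - (k:ℝ)/(2*α) - st₁/2) + (j:ℝ) ≠ 0 := by
      intro j h0
      apply hpos₁ k (Finset.mem_Icc.2 ⟨hk1, hkn⟩) (2*j+2) (by positivity)
      have h2 : (k:ℝ)/α = 2*((k:ℝ)/(2*α)) := by field_simp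
      push_cast
      linarith
    have hGL : GoodC (fun m => 1 / Real.Gamma ((⌈α⌉₊:ℝ) - α) * (dcF (k,false) m
        * (Real.Gamma ((⌈α⌉₊:ℝ) - α) * Real.Gamma (2*α*m + σF (k,false) + 1)
            / Real.Gamma ((⌈α⌉₊:ℝ) - α + (2*α*m + σF (k,false)) + 1))
        * ∏ l ∈ Finset.range ⌈α⌉₊, (2*α*m + (σF (k,false) + ((⌈α⌉₊:ℝ) - α)) - l))) := by
      have hbse : GoodC (dcF (k,false)) := hgF _ hp
      have h1 := hbse.betaFactor he0 (σF (k,false)) hcst0 (hσFb _ hp)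
      have h2 := h1.prodWeight he0 (σF (k,false) + ((⌈α⌉₊:ℝ) - α)) ⌈α⌉₊
      exact h2.constMul _
    simp only [pS]
    rw [Summable.tsum_eq_zero_add (hGL.summable_pS (2*α)
      (σF (k,false) + ((⌈α⌉₊:ℝ) - α) - ⌈α⌉₊) hz)]
    have hn0 : 0 < ⌈α⌉₊ := lt_of_lt_of_le hk1 hkn
    have hzero : (∏ l ∈ Finset.range ⌈α⌉₊,
        (2*α*((0:ℕ):ℝ) + (σF (k,false) + ((⌈α⌉₊:ℝ) - α)) - (l:ℝ))) = 0 := by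
      apply Finset.prod_eq_zero (Finset.mem_range.2 (Nat.sub_lt hn0 hk1))
      simp only [hσF, cond_false]
      push_cast [Nat.cast_sub hkn]
      ring
    rw [hzero, mul_zero, mul_zero, zero_mul, zero_add]
    refine tsum_congr fun j => ?_
    have hexp : 2*α*(((j+1:ℕ)):ℝ) + (σF (k,false) + ((⌈α⌉₊:ℝ) - α) - (⌈α⌉₊:ℝ))
        = 2*α*(j:ℝ) + σP (k,false) := by
      simp only [hσF, hσP, cond_false]
      push_cast
      ring
    rw [hexp]
    have hcoeff : 1 / Real.Gamma ((⌈α⌉₊:ℝ) - α) * (dcF (k,false) (j+1)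
        * (Real.Gamma ((⌈α⌉₊:ℝ) - α) * Real.Gamma (2*α*((j+1:ℕ):ℝ) + σF (k,false) + 1)
            / Real.Gamma ((⌈α⌉₊:ℝ) - α + (2*α*((j+1:ℕ):ℝ) + σF (k,false)) + 1))
        * ∏ l ∈ Finset.range ⌈α⌉₊,
            (2*α*((j+1:ℕ):ℝ) + (σF (k,false) + ((⌈α⌉₊:ℝ) - α)) - l))
        = a₁ * dcP (k,false) j + b₁ / α * (dcP (k,false) j * (2*α*(j:ℝ) + σP (k,false))) := by
      simp only [hdcF, hdcP, hσF, hσP, cond_false]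
      push_cast
      exact coeff_false α st₁ st₂ a₁ b₁ b₂ (c₁ k) ⌈α⌉₊ k j hα hαn hn1 hk1 hkn ha₁ (hneF j)
    rw [hcoeff]
  · -- the direct case
    have hne : ∀ m : ℕ, (1/2 - (k:ℝ)/(2*α) - st₁/2) + (m:ℝ) ≠ 0 := by
      intro m h0
      apply hpos₁ k (Finset.mem_Icc.2 ⟨hk1, hkn⟩) (2*m+1) (by positivity)
      have h2 : (k:ℝ)/α = 2*((k:ℝ)/(2*α)) := by field_simp
      push_cast
      linarith
    refine congrFun (pS_congr (fun m => ?_) (by simp only [hσF, hσP, cond_true]; ring)) z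
    exact coeff_true α st₁ st₂ a₁ b₁ b₂ (c₂ k) ⌈α⌉₊ k m hα hαn hn1 hk1 hkn ha₁ (hne m)
  done


lemma genWright_swap (A B : ℝ) (Bv bv : Fin 1 → ℝ) (x : ℝ) :
    genWright ![A, B, 1] ![1, 1, 1] Bv bv x = genWright ![B, A, 1] ![1, 1, 1] Bv bv x := by
  unfold genWright
  refine tsum_congr fun m => ?_
  simp only [Fin.prod_univ_three, Matrix.cons_val_zero, Matrix.cons_val_one, Matrix.head_cons,
    Matrix.cons_val_two, Matrix.tail_cons]
  ring


end Aux

/-- generalized-Wright solution of the system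
`D^α φ = a₁ ψ + (b₁/α) z ψ'`, `D^α ψ = a₂ φ + (b₂/α) z φ'` for non-integer
`α > 1` (Proposition 3.2(3)). -/
theorem statement8 (α : ℝ) (hα : 1 < α) (hαni : ∀ k : ℤ, α ≠ (k : ℝ))
    (a₁ a₂ b₁ b₂ : ℝ) (hb : b₁ * b₂ ≠ 0) (st₁ st₂ : ℝ)
    (hst₁ : st₁ = -a₁ / b₁) (hst₂ : st₂ = -a₂ / b₂)
    (hpos : ∀ k ∈ Finset.Icc 1 ⌈α⌉₊, ∀ j : ℤ, 0 < j →
      (k : ℝ) / α + st₁ ≠ (j : ℝ) ∧ (k : ℝ) / α + st₂ ≠ (j : ℝ))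
    (c₁ c₂ : ℕ → ℝ) (φ ψ : ℝ → ℝ)
    (hφ : φ = fun x =>
      (∑ k ∈ Finset.Icc 1 ⌈α⌉₊, c₁ k * x ^ (α - (k : ℝ)) *
        genWright ![1 - (k : ℝ) / (2 * α) - st₁ / 2,
                    1 / 2 - (k : ℝ) / (2 * α) - st₂ / 2, 1] ![1, 1, 1]
          ![1 + α - (k : ℝ)] ![2 * α] (4 * b₁ * b₂ * x ^ (2 * α)))
      + 2 * b₁ * ∑ k ∈ Finset.Icc 1 ⌈α⌉₊, c₂ k * x ^ (2 * α - (k : ℝ)) *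
        genWright ![3 / 2 - (k : ℝ) / (2 * α) - st₁ / 2,
                    1 - (k : ℝ) / (2 * α) - st₂ / 2, 1] ![1, 1, 1]
          ![1 + 2 * α - (k : ℝ)] ![2 * α] (4 * b₁ * b₂ * x ^ (2 * α)))
    (hψ : ψ = fun x =>
      2 * b₂ * (∑ k ∈ Finset.Icc 1 ⌈α⌉₊, c₁ k * x ^ (2 * α - (k : ℝ)) *
        genWright ![1 - (k : ℝ) / (2 * α) - st₁ / 2,
                    3 / 2 - (k : ℝ) / (2 * α) - st₂ / 2, 1] ![1, 1, 1]
          ![1 + 2 * α - (k : ℝ)] ![2 * α] (4 * b₁ * b₂ * x ^ (2 * α)))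
      + ∑ k ∈ Finset.Icc 1 ⌈α⌉₊, c₂ k * x ^ (α - (k : ℝ)) *
        genWright ![1 / 2 - (k : ℝ) / (2 * α) - st₁ / 2,
                    1 - (k : ℝ) / (2 * α) - st₂ / 2, 1] ![1, 1, 1]
          ![1 + α - (k : ℝ)] ![2 * α] (4 * b₁ * b₂ * x ^ (2 * α))) :
    ∀ z : ℝ, 0 < z →
      rlDeriv α φ z = a₁ * ψ z + (b₁ / α) * z * deriv ψ z ∧
      rlDeriv α ψ z = a₂ * φ z + (b₂ / α) * z * deriv φ z := by

  have hb₁ : b₁ ≠ 0 := fun h => hb (by rw [h]; ring)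
  have hb₂ : b₂ ≠ 0 := fun h => hb (by rw [h]; ring)
  have hψ' : ψ = fun x =>
      (∑ k ∈ Finset.Icc 1 ⌈α⌉₊, c₂ k * x ^ (α - (k : ℝ)) *
        genWright ![1 - (k : ℝ) / (2 * α) - st₂ / 2,
                    1 / 2 - (k : ℝ) / (2 * α) - st₁ / 2, 1] ![1, 1, 1]
          ![1 + α - (k : ℝ)] ![2 * α] (4 * b₂ * b₁ * x ^ (2 * α)))
      + 2 * b₂ * ∑ k ∈ Finset.Icc 1 ⌈α⌉₊, c₁ k * x ^ (2 * α - (k : ℝ)) *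
        genWright ![3 / 2 - (k : ℝ) / (2 * α) - st₂ / 2,
                    1 - (k : ℝ) / (2 * α) - st₁ / 2, 1] ![1, 1, 1]
          ![1 + 2 * α - (k : ℝ)] ![2 * α] (4 * b₂ * b₁ * x ^ (2 * α)) := by
    rw [hψ]
    funext x
    rw [show (4 * b₂ * b₁ : ℝ) = 4 * b₁ * b₂ by ring]
    rw [add_comm]
    congr 1
    · refine Finset.sum_congr rfl fun k _ => ?_
      rw [genWright_swap]
    · congr 1
      refine Finset.sum_congr rfl fun k _ => ?_
      rw [genWright_swap]
  have hφ' : φ = fun x =>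
      2 * b₁ * (∑ k ∈ Finset.Icc 1 ⌈α⌉₊, c₂ k * x ^ (2 * α - (k : ℝ)) *
        genWright ![1 - (k : ℝ) / (2 * α) - st₂ / 2,
                    3 / 2 - (k : ℝ) / (2 * α) - st₁ / 2, 1] ![1, 1, 1]
          ![1 + 2 * α - (k : ℝ)] ![2 * α] (4 * b₂ * b₁ * x ^ (2 * α)))
      + ∑ k ∈ Finset.Icc 1 ⌈α⌉₊, c₁ k * x ^ (α - (k : ℝ)) *
        genWright ![1 / 2 - (k : ℝ) / (2 * α) - st₂ / 2,
                    1 - (k : ℝ) / (2 * α) - st₁ / 2, 1] ![1, 1, 1]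
          ![1 + α - (k : ℝ)] ![2 * α] (4 * b₂ * b₁ * x ^ (2 * α)) := by
    rw [hφ]
    funext x
    rw [show (4 * b₂ * b₁ : ℝ) = 4 * b₁ * b₂ by ring]
    rw [add_comm]
    congr 1
    · congr 1
      refine Finset.sum_congr rfl fun k _ => ?_
      rw [genWright_swap]
    · refine Finset.sum_congr rfl fun k _ => ?_
      rw [genWright_swap]
  intro z hz
  constructor
  · exact key α hα hαni a₁ b₁ b₂ hb₁ hb₂ st₁ st₂ hst₁
      (fun k hk j hj => (hpos k hk j hj).1) c₁ c₂ φ ψ hφ hψ z hz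
  · exact key α hα hαni a₂ b₂ b₁ hb₂ hb₁ st₂ st₁ hst₂
      (fun k hk j hj => (hpos k hk j hj).2) c₂ c₁ ψ φ hψ' hφ' z hz
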